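/- arXiv:0903.0433 — 7 statements merged into one kernel-verified Lean document; each statement's English description precedes it below -/
import Mathlib

section
/- Let f : ℝ^d → ℝ be measurable. Then ∫_{ℝ^d} |f(x)| dx ≤ Vol(B₁) · sup over all finite sets X ⊂ ℝ^d whose points are pairwise at distance ≥ 1 of ∑_{x ∈ X} |f(x)|, where B₁ is the unit ball. -/
open MeasureTheory Metric ENNReal

namespace Stmt0
open scoped Classical

variable {d : ℕ}

/-- separated finset -/
def Sep (X : Finset (EuclideanSpace ℝ (Fin d))) : Prop :=
  ∀ x ∈ X, ∀ y ∈ X, x ≠ y → 1 ≤ dist x y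

noncomputable def S (f : EuclideanSpace ℝ (Fin d) → ℝ) : ℝ≥0∞ :=
  ⨆ (X : Finset (EuclideanSpace ℝ (Fin d))) (_ : Sep X), ∑ x ∈ X, ENNReal.ofReal |f x|

def A (f : EuclideanSpace ℝ (Fin d) → ℝ) (t : ℝ) : Set (EuclideanSpace ℝ (Fin d)) :=
  {x | t < |f x|}

lemma sum_le_S {f : EuclideanSpace ℝ (Fin d) → ℝ} {X : Finset (EuclideanSpace ℝ (Fin d))}
    (hX : Sep X) : ∑ x ∈ X, ENNReal.ofReal |f x| ≤ S f :=
  le_iSup₂ (f := fun (X : Finset (EuclideanSpace ℝ (Fin d))) (_ : Sep X) =>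
    ∑ x ∈ X, ENNReal.ofReal |f x|) X hX

lemma A_anti {f : EuclideanSpace ℝ (Fin d) → ℝ} {s t : ℝ} (h : s ≤ t) : A f t ⊆ A f s :=
  fun _ hx => lt_of_le_of_lt h hx

lemma card_le {f : EuclideanSpace ℝ (Fin d) → ℝ} {t : ℝ}
    {X : Finset (EuclideanSpace ℝ (Fin d))} (hX : Sep X) (hXA : ↑X ⊆ A f t) :
    (X.card : ℝ≥0∞) * ENNReal.ofReal t ≤ S f := by
  calc (X.card : ℝ≥0∞) * ENNReal.ofReal t = ∑ _x ∈ X, ENNReal.ofReal t := by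
        rw [Finset.sum_const, nsmul_eq_mul]
    _ ≤ ∑ x ∈ X, ENNReal.ofReal |f x| := Finset.sum_le_sum fun x hx =>
        ENNReal.ofReal_le_ofReal (le_of_lt (hXA hx))
    _ ≤ S f := sum_le_S hX

lemma exists_maximal {f : EuclideanSpace ℝ (Fin d) → ℝ} (hS : S f ≠ ⊤) {t : ℝ} (ht : 0 < t)
    (F₀ : Finset (EuclideanSpace ℝ (Fin d))) (hsep : Sep F₀) (hsub : ↑F₀ ⊆ A f t) :
    ∃ F : Finset (EuclideanSpace ℝ (Fin d)), F₀ ⊆ F ∧ Sep F ∧ ↑F ⊆ A f t ∧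
      ∀ z ∈ A f t, ∃ x ∈ F, dist z x < 1 := by
  classical
  set 𝒮 : Set ℕ := {n | ∃ X : Finset (EuclideanSpace ℝ (Fin d)),
    Sep X ∧ ↑X ⊆ A f t ∧ F₀ ⊆ X ∧ X.card = n} with h𝒮
  have hne : 𝒮.Nonempty := ⟨F₀.card, F₀, hsep, hsub, Finset.Subset.refl _, rfl⟩
  obtain ⟨m, hm⟩ : ∃ m : ℕ, S f / ENNReal.ofReal t < (m : ℝ≥0∞) :=
    ENNReal.exists_nat_gt (ENNReal.div_lt_top hS (ENNReal.ofReal_pos.2 ht).ne').ne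
  have hbdd : BddAbove 𝒮 := by
    refine ⟨m, fun n hn => ?_⟩
    obtain ⟨X, hX1, hX2, _, rfl⟩ := hn
    have h1 : (X.card : ℝ≥0∞) * ENNReal.ofReal t ≤ S f := card_le hX1 hX2
    have h2 : (X.card : ℝ≥0∞) ≤ S f / ENNReal.ofReal t :=
      (ENNReal.le_div_iff_mul_le (Or.inl (ENNReal.ofReal_pos.2 ht).ne') (Or.inl ENNReal.ofReal_ne_top)).2 h1
    have h3 : (X.card : ℝ≥0∞) ≤ (m : ℝ≥0∞) := h2.trans hm.le
    exact_mod_cast h3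
  obtain ⟨X, hX1, hX2, hX0, hcard⟩ := Nat.sSup_mem hne hbdd
  refine ⟨X, hX0, hX1, hX2, fun z hz => ?_⟩
  by_contra h
  push_neg at h
  have hzX : z ∉ X := fun hzX => by have := h z hzX; norm_num at this
  have hsep' : Sep (insert z X) := by
    intro x hx y hy hxy
    rcases Finset.mem_insert.1 hx with hx' | hx'
    · rcases Finset.mem_insert.1 hy with hy' | hy'
      · exact absurd (hx'.trans hy'.symm) hxy
      · rw [hx']; exact h y hy'
    · rcases Finset.mem_insert.1 hy with hy' | hy'
      · rw [hy', dist_comm]; exact h x hx'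
      · exact hX1 x hx' y hy' hxy
  have hsub' : ↑(insert z X) ⊆ A f t := by
    intro x hx
    rcases Finset.mem_insert.1 (Finset.mem_coe.1 hx) with h' | h'
    · rw [h']; exact hz
    · exact hX2 (Finset.mem_coe.2 h')
  have hle : (insert z X).card ≤ sSup 𝒮 :=
    le_csSup hbdd ⟨insert z X, hsep', hsub', hX0.trans (Finset.subset_insert _ _), rfl⟩
  rw [Finset.card_insert_of_notMem hzX, hcard] at hle
  omega

lemma measure_A_le {f : EuclideanSpace ℝ (Fin d) → ℝ} {t : ℝ}
    {F : Finset (EuclideanSpace ℝ (Fin d))}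
    (hcov : ∀ z ∈ A f t, ∃ x ∈ F, dist z x < 1) :
    volume (A f t) ≤ (F.card : ℝ≥0∞) * volume (ball (0 : EuclideanSpace ℝ (Fin d)) 1) := by
  have hsub : A f t ⊆ ⋃ x ∈ F, ball x 1 := by
    intro z hz
    obtain ⟨x, hx, hd⟩ := hcov z hz
    exact Set.mem_biUnion hx (by simpa [mem_ball] using hd)
  calc volume (A f t) ≤ ∑ x ∈ F, volume (ball x 1) :=
        (measure_mono hsub).trans (measure_biUnion_finset_le _ _)
    _ = (F.card : ℝ≥0∞) * volume (ball (0 : EuclideanSpace ℝ (Fin d)) 1) := by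
        rw [Finset.sum_congr rfl fun x _ => Measure.addHaar_ball_center volume x 1,
          Finset.sum_const, nsmul_eq_mul]


lemma exists_chain {f : EuclideanSpace ℝ (Fin d) → ℝ} (hS : S f ≠ ⊤) {ε : ℝ} (hε : 0 < ε)
    (N : ℕ) :
    ∃ F : ℕ → Finset (EuclideanSpace ℝ (Fin d)),
      (∀ k, 1 ≤ k → k ≤ N → Sep (F k) ∧ ↑(F k) ⊆ A f (k * ε) ∧
        ∀ z ∈ A f (k * ε), ∃ x ∈ F k, dist z x < 1) ∧
      (∀ j k, 1 ≤ j → j ≤ k → k ≤ N → F k ⊆ F j) := by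
  classical
  have main : ∀ m, m ≤ N → ∃ F : ℕ → Finset (EuclideanSpace ℝ (Fin d)),
      (∀ k, N - m < k → k ≤ N → Sep (F k) ∧ ↑(F k) ⊆ A f (k * ε) ∧
        ∀ z ∈ A f (k * ε), ∃ x ∈ F k, dist z x < 1) ∧
      (∀ j k, N - m < j → j ≤ k → k ≤ N → F k ⊆ F j) ∧
      (∀ k, k ≤ N - m ∨ N < k → F k = ∅) := by
    intro m
    induction m with
    | zero =>
      intro _
      exact ⟨fun _ => ∅, fun k h1 h2 => by omega, fun j k h1 h2 h3 => by omega,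
        fun k _ => rfl⟩
    | succ m ih =>
      intro hmN
      obtain ⟨F, hF, hmono, hjunk⟩ := ih (by omega)
      set k₀ := N - m - 1 with hk₀
      have hk₀1 : 1 ≤ k₀ + 1 := by omega
      have hk₀N : k₀ + 1 ≤ N := by omega
      -- previous set at level k₀ + 2 (or ∅)
      have hprev_sep : Sep (F (k₀ + 2)) := by
        by_cases h : k₀ + 2 ≤ N
        · exact (hF (k₀ + 2) (by omega) h).1
        · rw [hjunk (k₀ + 2) (Or.inr (by omega))]; intro x hx; simp at hx
      have hprev_sub : ↑(F (k₀ + 2)) ⊆ A f ((k₀ + 1 : ℕ) * ε) := by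
        by_cases h : k₀ + 2 ≤ N
        · refine Set.Subset.trans (hF (k₀ + 2) (by omega) h).2.1 (A_anti ?_)
          have : ((k₀:ℝ) + 1) * ε ≤ ((k₀:ℝ) + 2) * ε := by nlinarith
          push_cast
          linarith
        · rw [hjunk (k₀ + 2) (Or.inr (by omega))]; simp
      have htpos : (0:ℝ) < (k₀ + 1 : ℕ) * ε := by
        have : (0:ℝ) < ((k₀:ℝ) + 1) := by positivity
        push_cast
        nlinarith
      obtain ⟨G, hG0, hGsep, hGsub, hGcov⟩ :=
        exists_maximal hS htpos (F (k₀ + 2)) hprev_sep hprev_sub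
      refine ⟨fun k => if k = k₀ + 1 then G else F k, ?_, ?_, ?_⟩
      · intro k h1 h2
        by_cases h : k = k₀ + 1
        · subst h; simp only [if_pos rfl]; exact ⟨hGsep, hGsub, hGcov⟩
        · simp only [if_neg h]; exact hF k (by omega) h2
      · intro j k h1 h2 h3
        by_cases hj : j = k₀ + 1
        · subst hj
          simp only [if_pos rfl]
          by_cases hk : k = k₀ + 1
          · subst hk; simp
          · simp only [if_neg hk]
            exact (hmono (k₀ + 2) k (by omega) (by omega) h3).trans hG0
        · simp only [if_neg hj]
          by_cases hk : k = k₀ + 1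
          · omega
          · simp only [if_neg hk]
            exact hmono j k (by omega) h2 h3
      · intro k hk
        have h : k ≠ k₀ + 1 := by omega
        simp only [if_neg h]
        exact hjunk k (by omega)
  obtain ⟨F, hF, hmono, _⟩ := main N le_rfl
  exact ⟨F, fun k h1 h2 => hF k (by omega) h2, fun j k h1 h2 h3 => hmono j k (by omega) h2 h3⟩

lemma count_le {f : EuclideanSpace ℝ (Fin d) → ℝ} {ε : ℝ} (hε : 0 < ε) (N : ℕ)
    {F : ℕ → Finset (EuclideanSpace ℝ (Fin d))}
    (hF : ∀ k, 1 ≤ k → k ≤ N → ↑(F k) ⊆ A f (k * ε))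
    (hmono : ∀ j k, 1 ≤ j → j ≤ k → k ≤ N → F k ⊆ F j)
    {x : EuclideanSpace ℝ (Fin d)} (_hx : x ∈ F 1) :
    (((Finset.range N).filter fun k => x ∈ F (k + 1)).card : ℝ≥0∞) * ENNReal.ofReal ε
      ≤ ENNReal.ofReal |f x| := by
  classical
  set K := (Finset.range N).filter fun k => x ∈ F (k + 1) with hK
  rcases K.eq_empty_or_nonempty with he | hne
  · simp [he]
  · set M := K.max' hne with hM
    have hMK : M ∈ K := K.max'_mem hne
    have hMN : M < N := by
      have := (Finset.mem_filter.1 hMK).1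
      simpa using this
    have hxM : x ∈ F (M + 1) := (Finset.mem_filter.1 hMK).2
    have hKeq : K = Finset.range (M + 1) := by
      apply Finset.ext
      intro j
      constructor
      · intro hj
        exact Finset.mem_range.2 (Nat.lt_succ_of_le (K.le_max' j hj))
      · intro hj
        have hjM : j ≤ M := Nat.lt_succ_iff.1 (Finset.mem_range.1 hj)
        refine Finset.mem_filter.2 ⟨Finset.mem_range.2 (by omega), ?_⟩
        exact hmono (j + 1) (M + 1) (by omega) (by omega) (by omega) hxM
    have hcard : K.card = M + 1 := by rw [hKeq, Finset.card_range]
    have hmem : x ∈ A f ((M + 1 : ℕ) * ε) := hF (M + 1) (by omega) (by omega) hxM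
    have hlt : ((M + 1 : ℕ) : ℝ) * ε < |f x| := hmem
    calc (K.card : ℝ≥0∞) * ENNReal.ofReal ε
        = ENNReal.ofReal (((M + 1 : ℕ) : ℝ) * ε) := by
          rw [hcard, ENNReal.ofReal_mul (by positivity), ENNReal.ofReal_natCast]
      _ ≤ ENNReal.ofReal |f x| := ENNReal.ofReal_le_ofReal hlt.le

lemma partial_sum_le {f : EuclideanSpace ℝ (Fin d) → ℝ} (hS : S f ≠ ⊤) {ε : ℝ} (hε : 0 < ε)
    (N : ℕ) :
    ∑ k ∈ Finset.range N, ENNReal.ofReal ε * volume (A f ((k + 1 : ℕ) * ε)) ≤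
      volume (ball (0 : EuclideanSpace ℝ (Fin d)) 1) * S f := by
  classical
  rcases Nat.eq_zero_or_pos N with rfl | hN
  · simp
  obtain ⟨F, hF, hmono⟩ := exists_chain hS hε N
  set v := volume (ball (0 : EuclideanSpace ℝ (Fin d)) 1) with hv
  have step1 : ∀ k ∈ Finset.range N,
      ENNReal.ofReal ε * volume (A f ((k + 1 : ℕ) * ε)) ≤
        ENNReal.ofReal ε * (((F (k + 1)).card : ℝ≥0∞) * v) := by
    intro k hk
    have hkN := Finset.mem_range.1 hk
    exact mul_le_mul_right (measure_A_le (hF (k + 1) (by omega) (by omega)).2.2) _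
  have hF1 : Sep (F 1) := (hF 1 le_rfl hN).1
  have count : ∑ k ∈ Finset.range N, ((F (k + 1)).card : ℝ≥0∞) * ENNReal.ofReal ε ≤
      ∑ x ∈ F 1, ENNReal.ofReal |f x| := by
    have hcards : ∀ k ∈ Finset.range N,
        (F (k + 1)).card = ((F 1).filter fun x => x ∈ F (k + 1)).card := by
      intro k hk
      have hkN := Finset.mem_range.1 hk
      congr 1
      apply Finset.ext
      intro x
      simp only [Finset.mem_filter]
      exact ⟨fun h => ⟨hmono 1 (k + 1) le_rfl (by omega) (by omega) h, h⟩, fun h => h.2⟩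
    calc ∑ k ∈ Finset.range N, ((F (k + 1)).card : ℝ≥0∞) * ENNReal.ofReal ε
        = ∑ k ∈ Finset.range N,
            ∑ x ∈ F 1, (if x ∈ F (k + 1) then (1:ℝ≥0∞) else 0) * ENNReal.ofReal ε := by
          refine Finset.sum_congr rfl fun k hk => ?_
          rw [hcards k hk, Finset.card_filter]
          push_cast
          rw [Finset.sum_mul]
      _ = ∑ x ∈ F 1,
            ∑ k ∈ Finset.range N, (if x ∈ F (k + 1) then (1:ℝ≥0∞) else 0) * ENNReal.ofReal ε :=
          Finset.sum_comm
      _ ≤ ∑ x ∈ F 1, ENNReal.ofReal |f x| := by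
          refine Finset.sum_le_sum fun x hx => ?_
          have : ∑ k ∈ Finset.range N,
              (if x ∈ F (k + 1) then (1:ℝ≥0∞) else 0) * ENNReal.ofReal ε =
              (((Finset.range N).filter fun k => x ∈ F (k + 1)).card : ℝ≥0∞) *
                ENNReal.ofReal ε := by
            rw [Finset.card_filter]
            push_cast
            rw [Finset.sum_mul]
          rw [this]
          exact count_le hε N (fun k h1 h2 => (hF k h1 h2).2.1) hmono hx
  calc ∑ k ∈ Finset.range N, ENNReal.ofReal ε * volume (A f ((k + 1 : ℕ) * ε))
      ≤ ∑ k ∈ Finset.range N, ENNReal.ofReal ε * (((F (k + 1)).card : ℝ≥0∞) * v) :=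
        Finset.sum_le_sum step1
    _ = v * ∑ k ∈ Finset.range N, ((F (k + 1)).card : ℝ≥0∞) * ENNReal.ofReal ε := by
        rw [Finset.mul_sum]
        exact Finset.sum_congr rfl fun k _ => by ring
    _ ≤ v * ∑ x ∈ F 1, ENNReal.ofReal |f x| := mul_le_mul_right count _
    _ ≤ v * S f := mul_le_mul_right (sum_le_S hF1) _

lemma lintegral_Ioi_le {f : EuclideanSpace ℝ (Fin d) → ℝ} (hS : S f ≠ ⊤) {ε : ℝ}
    (hε : 0 < ε) :
    ∫⁻ t in Set.Ioi ε, volume (A f t) ≤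
      volume (ball (0 : EuclideanSpace ℝ (Fin d)) 1) * S f := by
  set v := volume (ball (0 : EuclideanSpace ℝ (Fin d)) 1) with hv
  set g : ℕ → ℝ → ℝ≥0∞ := fun k =>
    (Set.Ioc (((k:ℝ) + 1) * ε) (((k:ℝ) + 2) * ε)).indicator
      (fun _ => volume (A f ((k + 1 : ℕ) * ε))) with hg
  have hgmeas : ∀ k, Measurable (g k) := fun k =>
    (measurable_const.indicator measurableSet_Ioc)
  have hpt : ∀ t ∈ Set.Ioi ε, volume (A f t) ≤ ∑' k : ℕ, g k t := by
    intro t ht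
    have htε : ε < t := ht
    have h1 : 1 < t / ε := (one_lt_div hε).2 htε
    set n := ⌈t / ε⌉₊ with hn
    have hn2 : 2 ≤ n := by
      have h1n : 1 < n := by
        rw [hn, Nat.lt_ceil]
        exact_mod_cast h1
      omega
    set k := n - 2 with hk
    have hcast1 : ((k:ℝ) + 1) = (n:ℝ) - 1 := by
      have : (k:ℝ) = (n:ℝ) - 2 := by
        rw [hk]
        push_cast [Nat.cast_sub (by omega : 2 ≤ n)]
        ring
      linarith
    have hcast2 : ((k:ℝ) + 2) = (n:ℝ) := by linarith
    have htpos : 0 < t := lt_trans hε htε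
    have hmem : t ∈ Set.Ioc (((k:ℝ) + 1) * ε) (((k:ℝ) + 2) * ε) := by
      constructor
      · rw [hcast1]
        have hlt : (n:ℝ) < t / ε + 1 := by
          have := Nat.ceil_lt_add_one (le_of_lt (div_pos htpos hε))
          rw [hn]
          exact this
        have : (n:ℝ) - 1 < t / ε := by linarith
        calc ((n:ℝ) - 1) * ε < (t / ε) * ε := by
              exact mul_lt_mul_of_pos_right this hε
          _ = t := div_mul_cancel₀ t hε.ne'
      · rw [hcast2]
        have : t / ε ≤ (n:ℝ) := Nat.le_ceil _
        calc t = (t / ε) * ε := (div_mul_cancel₀ t hε.ne').symm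
          _ ≤ (n:ℝ) * ε := mul_le_mul_of_nonneg_right this hε.le
    have hle : volume (A f t) ≤ volume (A f ((k + 1 : ℕ) * ε)) := by
      apply measure_mono
      apply A_anti
      have := hmem.1
      push_cast
      linarith
    calc volume (A f t) ≤ g k t := by
          rw [hg]
          simp only [Set.indicator_of_mem hmem]
          exact hle
      _ ≤ ∑' k : ℕ, g k t := ENNReal.le_tsum k
  have hIoc : ∀ k : ℕ, volume (Set.Ioc (((k:ℝ) + 1) * ε) (((k:ℝ) + 2) * ε)) =
      ENNReal.ofReal ε := by
    intro k
    rw [Real.volume_Ioc]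
    congr 1
    ring
  calc ∫⁻ t in Set.Ioi ε, volume (A f t)
      ≤ ∫⁻ t in Set.Ioi ε, ∑' k : ℕ, g k t :=
        setLIntegral_mono (Measurable.ennreal_tsum hgmeas) hpt
    _ ≤ ∫⁻ t, ∑' k : ℕ, g k t := setLIntegral_le_lintegral _ _
    _ = ∑' k : ℕ, ∫⁻ t, g k t := lintegral_tsum fun k => (hgmeas k).aemeasurable
    _ = ∑' k : ℕ, ENNReal.ofReal ε * volume (A f ((k + 1 : ℕ) * ε)) := by
        refine tsum_congr fun k => ?_
        rw [hg]
        rw [lintegral_indicator measurableSet_Ioc, setLIntegral_const, hIoc k, mul_comm]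
    _ = ⨆ N : ℕ, ∑ k ∈ Finset.range N,
          ENNReal.ofReal ε * volume (A f ((k + 1 : ℕ) * ε)) := ENNReal.tsum_eq_iSup_nat
    _ ≤ v * S f := by
        apply iSup_le
        intro N
        exact partial_sum_le hS hε N

lemma main_ineq {f : EuclideanSpace ℝ (Fin d) → ℝ} (hf : Measurable f) :
    ∫⁻ x, ENNReal.ofReal |f x| ≤
      volume (ball (0 : EuclideanSpace ℝ (Fin d)) 1) * S f := by
  set v := volume (ball (0 : EuclideanSpace ℝ (Fin d)) 1) with hv
  have hv0 : v ≠ 0 := (measure_ball_pos volume 0 one_pos).ne'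
  rcases eq_or_ne (S f) ⊤ with hS | hS
  · rw [hS, ENNReal.mul_top hv0]
    exact le_top
  rw [lintegral_eq_lintegral_meas_lt volume (Filter.Eventually.of_forall fun x => abs_nonneg (f x))
    hf.abs.aemeasurable]
  have hmeas : Measurable fun t : ℝ => volume (A f t) :=
    Antitone.measurable fun s t h => measure_mono (A_anti h)
  set h : ℝ → ℝ≥0∞ := fun t => volume (A f t) with hh
  have heq : ∀ t : ℝ, volume {a : EuclideanSpace ℝ (Fin d) | t < |f a|} = h t := fun t => rfl
  set G : ℕ → ℝ → ℝ≥0∞ := fun n =>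
    (Set.Ioi (1 / ((n:ℝ) + 1))).indicator h with hG
  have hGmeas : ∀ n, Measurable (G n) := fun n => hmeas.indicator measurableSet_Ioi
  have hGmono : Monotone G := by
    intro n m hnm
    apply Set.indicator_le_indicator_of_subset
    · apply Set.Ioi_subset_Ioi
      apply one_div_le_one_div_of_le
      · positivity
      · exact_mod_cast by omega
    · intro t; exact zero_le
  calc ∫⁻ t in Set.Ioi (0:ℝ), volume {a : EuclideanSpace ℝ (Fin d) | t < |f a|}
      = ∫⁻ t in Set.Ioi (0:ℝ), h t := by simp only [heq]
    _ ≤ ∫⁻ t in Set.Ioi (0:ℝ), ⨆ n : ℕ, G n t := by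
        refine setLIntegral_mono (by measurability) fun t ht => ?_
        obtain ⟨n, hn⟩ := exists_nat_one_div_lt (Set.mem_Ioi.1 ht)
        refine le_iSup_of_le n ?_
        have hmem : t ∈ Set.Ioi (1 / ((n:ℝ) + 1)) := by
          simp only [Set.mem_Ioi]
          exact_mod_cast hn
        show h t ≤ (Set.Ioi (1 / ((n:ℝ) + 1))).indicator h t
        rw [Set.indicator_of_mem hmem]
    _ ≤ ∫⁻ t, ⨆ n : ℕ, G n t := setLIntegral_le_lintegral _ _
    _ = ⨆ n : ℕ, ∫⁻ t, G n t := lintegral_iSup hGmeas hGmono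
    _ = ⨆ n : ℕ, ∫⁻ t in Set.Ioi (1 / ((n:ℝ) + 1)), h t := by
        refine iSup_congr fun n => ?_
        show (∫⁻ t, (Set.Ioi (1 / ((n:ℝ) + 1))).indicator h t) = _
        rw [lintegral_indicator measurableSet_Ioi]
    _ ≤ v * S f := iSup_le fun n => lintegral_Ioi_le hS (by positivity)

end Stmt0

/-- For measurable `f : ℝ^d → ℝ`,
`∫ |f| ≤ Vol(B₁) · sup_{X ∈ C} ∑_{x ∈ X} |f x|`, where `C` is the class of
finite subsets of `ℝ^d` whose points are pairwise at distance ≥ 1.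
The supremum (possibly `+∞`) is taken in `ℝ≥0∞`. -/
theorem stmt_0 (d : ℕ) (f : EuclideanSpace ℝ (Fin d) → ℝ) (hf : Measurable f) :
    ∫⁻ x, ENNReal.ofReal |f x| ≤
      volume (ball (0 : EuclideanSpace ℝ (Fin d)) 1) *
        ⨆ (X : Finset (EuclideanSpace ℝ (Fin d)))
          (_ : ∀ x ∈ X, ∀ y ∈ X, x ≠ y → 1 ≤ dist x y),
          ∑ x ∈ X, ENNReal.ofReal |f x| :=
  Stmt0.main_ineq hf
end

section
/- Let f : ℝ^d → ℝ be measurable. Then ∫_{ℝ^d \ B₁} |f(x)| dx ≤ Vol(B₁) · sup over all finite sets X ⊂ ℝ^d \ B₁ whose points are pairwise separated by distance ≥ 1 of ∑_{x ∈ X} |f(x)|. -/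
open MeasureTheory Metric
open scoped ENNReal

section Stmt1Aux

private def IsSep {d : ℕ} (X : Set (EuclideanSpace ℝ (Fin d))) : Prop :=
  ∀ x ∈ X, ∀ y ∈ X, x ≠ y → 1 ≤ dist x y

/-- Existence of a separated "dominating" set for a function with finitely many values. -/
private lemma exists_dom (d : ℕ) (T : Finset ℝ≥0∞) :
    ∀ (φ : EuclideanSpace ℝ (Fin d) → ℝ≥0∞),
    (∀ a, φ a ≠ 0 → a ∈ (ball (0 : EuclideanSpace ℝ (Fin d)) 1)ᶜ) →
    ∀ (X₀ : Set (EuclideanSpace ℝ (Fin d))),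
      X₀ ⊆ (ball (0 : EuclideanSpace ℝ (Fin d)) 1)ᶜ → IsSep X₀ →
      (∀ x ∈ X₀, ∀ r ∈ T, r ≤ φ x) →
      (∀ a, φ a ≠ 0 → φ a ∉ T → ∃ x ∈ X₀, dist a x < 1 ∧ φ a ≤ φ x) →
    ∃ X, X ⊆ (ball (0 : EuclideanSpace ℝ (Fin d)) 1)ᶜ ∧ IsSep X ∧
      ∀ a, φ a ≠ 0 → ∃ x ∈ X, dist a x < 1 ∧ φ a ≤ φ x := by
  induction T using Finset.strongInduction with
  | _ T IH =>
  intro φ hA X₀ h1 h2 h3 h4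
  rcases T.eq_empty_or_nonempty with rfl | hTne
  · exact ⟨X₀, h1, h2, fun a ha => h4 a ha (Finset.notMem_empty _)⟩
  set t := T.max' hTne with htdef
  set E : Set (EuclideanSpace ℝ (Fin d)) :=
    {a | t ≤ φ a ∧ a ∈ (ball (0 : EuclideanSpace ℝ (Fin d)) 1)ᶜ} with hEdef
  have hzorn : ∃ m, X₀ ⊆ m ∧
      Maximal (· ∈ {Y : Set (EuclideanSpace ℝ (Fin d)) | Y ⊆ X₀ ∪ E ∧ IsSep Y}) m := by
    refine zorn_subset_nonempty _ ?_ X₀ ⟨Set.subset_union_left, h2⟩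
    intro c hcS hchain hcne
    refine ⟨⋃₀ c, ⟨?_, ?_⟩, fun s hs => Set.subset_sUnion_of_mem hs⟩
    · exact Set.sUnion_subset fun s hs => (hcS hs).1
    · intro x hx y hy hxy
      obtain ⟨s, hs, hxs⟩ := hx
      obtain ⟨s', hs', hys⟩ := hy
      rcases hchain.total hs hs' with h | h
      · exact (hcS hs').2 x (h hxs) y hys hxy
      · exact (hcS hs).2 x hxs y (h hys) hxy
  obtain ⟨X₁, hX₀X₁, hX₁max⟩ := hzorn
  obtain ⟨hX₁sub, hX₁sep⟩ := hX₁max.prop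
  have hX₁A : X₁ ⊆ (ball (0 : EuclideanSpace ℝ (Fin d)) 1)ᶜ := by
    intro x hx
    rcases hX₁sub hx with h | h
    · exact h1 h
    · exact h.2
  -- every point of `E` is within distance < 1 of a point of `X₁`
  have hnear : ∀ a ∈ E, ∃ x ∈ X₁, dist a x < 1 := by
    intro a ha
    by_cases haX : a ∈ X₁
    · exact ⟨a, haX, by simp⟩
    by_contra hno
    push_neg at hno
    have hins : insert a X₁ ∈ {Y : Set (EuclideanSpace ℝ (Fin d)) | Y ⊆ X₀ ∪ E ∧ IsSep Y} := by
      constructor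
      · exact Set.insert_subset (Set.mem_union_right _ ha) hX₁sub
      · intro x hx y hy hxy
        rcases hx with rfl | hx
        · rcases hy with rfl | hy
          · exact absurd rfl hxy
          · exact hno y hy
        · rcases hy with rfl | hy
          · rw [dist_comm]; exact hno x hx
          · exact hX₁sep x hx y hy hxy
    have := hX₁max.2 hins (Set.subset_insert a X₁)
    exact haX (this (Set.mem_insert a X₁))
  -- values at points of X₁ are ≥ everything in T.erase t
  have hX₁val : ∀ x ∈ X₁, ∀ r ∈ T.erase t, r ≤ φ x := by
    intro x hx r hr
    have hrT : r ∈ T := Finset.mem_of_mem_erase hr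
    rcases hX₁sub hx with h | h
    · exact h3 x h r hrT
    · exact (T.le_max' r hrT).trans h.1
  have hdom' : ∀ a, φ a ≠ 0 → φ a ∉ T.erase t → ∃ x ∈ X₁, dist a x < 1 ∧ φ a ≤ φ x := by
    intro a ha hnot
    by_cases haT : φ a ∈ T
    · -- then φ a = t
      have hat : φ a = t := by
        by_contra hne
        exact hnot (Finset.mem_erase.2 ⟨hne, haT⟩)
      have haE : a ∈ E := ⟨hat.ge, hA a ha⟩
      obtain ⟨x, hx, hdx⟩ := hnear a haE
      refine ⟨x, hx, hdx, ?_⟩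
      rcases hX₁sub hx with h | h
      · exact hat ▸ h3 x h t (T.max'_mem hTne)
      · exact hat ▸ h.1
    · obtain ⟨x, hx, hdx, hle⟩ := h4 a ha haT
      exact ⟨x, hX₀X₁ hx, hdx, hle⟩
  exact IH (T.erase t) (Finset.erase_ssubset (T.max'_mem hTne)) φ hA X₁ hX₁A hX₁sep hX₁val hdom'

/-- Main estimate: the integral of a function with finitely many values which is dominated by a
separated set `X` is at most `Vol(B₁)` times the sup of finite sums over subsets of `X`. -/
private lemma main_est (d : ℕ) (R : Finset ℝ≥0∞) :
    ∀ (φ : EuclideanSpace ℝ (Fin d) → ℝ≥0∞), Measurable φ →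
    (∀ a, φ a ≠ 0 → φ a ∈ R) →
    ∀ (X : Set (EuclideanSpace ℝ (Fin d))),
    (∀ a, φ a ≠ 0 → ∃ x ∈ X, dist a x < 1 ∧ φ a ≤ φ x) →
    ∫⁻ a, φ a ≤ volume (ball (0 : EuclideanSpace ℝ (Fin d)) 1) *
      ⨆ (F : Finset (EuclideanSpace ℝ (Fin d))) (_ : ↑F ⊆ X), ∑ x ∈ F, φ x := by
  induction R using Finset.strongInduction with
  | _ R IH =>
  intro φ hφm hφR X hdom
  classical
  set V := volume (ball (0 : EuclideanSpace ℝ (Fin d)) 1) with hVdef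
  have hV0 : V ≠ 0 := (measure_ball_pos volume 0 one_pos).ne'
  by_cases hz : ∀ a, φ a = 0
  · simp [show φ = fun _ => (0 : ℝ≥0∞) from funext hz]
  push_neg at hz
  obtain ⟨a₀, ha₀⟩ := hz
  have hRne : R.Nonempty := ⟨φ a₀, hφR a₀ ha₀⟩
  set t := R.max' hRne with htdef
  have ht0 : t ≠ 0 := by
    intro h
    exact ha₀ (le_antisymm (le_trans (R.le_max' _ (hφR a₀ ha₀)) h.le) zero_le)
  set t₂ := (R.erase t).sup id with ht₂def
  have ht₂ : t₂ < t := by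
    rw [ht₂def]
    refine Finset.sup_lt_iff (zero_lt_iff.mpr ht0) |>.2 ?_
    intro b hb
    exact lt_of_le_of_ne (R.le_max' b (Finset.mem_of_mem_erase hb)) (Finset.ne_of_mem_erase hb)
  set E : Set (EuclideanSpace ℝ (Fin d)) := {a | t ≤ φ a} with hEdef
  have hEm : MeasurableSet E := hφm measurableSet_Ici
  set ψ : EuclideanSpace ℝ (Fin d) → ℝ≥0∞ := fun a => min (φ a) t₂ with hψdef
  have hψm : Measurable ψ := hφm.min measurable_const
  -- key pointwise identity
  have hkey : ∀ a, φ a = ψ a + E.indicator (fun _ => t - t₂) a := by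
    intro a
    rcases le_or_gt t (φ a) with hat | hat
    · have ha0 : φ a ≠ 0 := fun h => ht0 (le_antisymm (h ▸ hat) zero_le)
      have hφat : φ a = t := le_antisymm (R.le_max' _ (hφR a ha0)) hat
      rw [Set.indicator_of_mem (show a ∈ E from hat) (fun _ => t - t₂), hψdef]
      simp only [hφat, min_eq_right ht₂.le]
      exact (add_tsub_cancel_of_le ht₂.le).symm
    · have haE : a ∉ E := by simpa [hEdef] using hat
      rw [Set.indicator_of_notMem haE, add_zero, hψdef]
      refine (min_eq_left ?_).symm
      rcases eq_or_ne (φ a) 0 with h | h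
      · simp [h]
      · exact Finset.le_sup (f := id) (Finset.mem_erase.2 ⟨hat.ne, hφR a h⟩)
  -- values of ψ lie in R.erase t
  have hψR : ∀ a, ψ a ≠ 0 → ψ a ∈ R.erase t := by
    intro a ha
    rcases le_total (φ a) t₂ with h | h
    · rw [hψdef] at ha ⊢
      simp only [min_eq_left h] at ha ⊢
      exact Finset.mem_erase.2 ⟨(lt_of_le_of_lt h ht₂).ne, hφR a ha⟩
    · rw [hψdef] at ha ⊢
      simp only [min_eq_right h] at ha ⊢
      have hne : (R.erase t).Nonempty := by
        by_contra hemp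
        rw [Finset.not_nonempty_iff_eq_empty] at hemp
        rw [ht₂def, hemp] at ha
        simp at ha
      obtain ⟨b, hb, hsup⟩ := Finset.exists_mem_eq_sup (R.erase t) hne id
      rw [ht₂def, hsup]
      exact hb
  have hψdom : ∀ a, ψ a ≠ 0 → ∃ x ∈ X, dist a x < 1 ∧ ψ a ≤ ψ x := by
    intro a ha
    have hφa : φ a ≠ 0 := by
      intro h
      rw [hψdef] at ha
      simp [h] at ha
    obtain ⟨x, hx, hdx, hle⟩ := hdom a hφa
    exact ⟨x, hx, hdx, min_le_min hle le_rfl⟩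
  have hIH := IH (R.erase t) (Finset.erase_ssubset (R.max'_mem hRne)) ψ hψm hψR X hψdom
  -- counting estimate
  set Y : Set (EuclideanSpace ℝ (Fin d)) := {x ∈ X | t ≤ φ x} with hYdef
  set N : ℝ≥0∞ := ⨆ (F : Finset (EuclideanSpace ℝ (Fin d))) (_ : ↑F ⊆ Y), (F.card : ℝ≥0∞)
    with hNdef
  have hcover : E ⊆ ⋃ x ∈ Y, ball x 1 := by
    intro a ha
    have hφa : φ a ≠ 0 := fun h => ht0 (le_antisymm (h ▸ ha) zero_le)
    obtain ⟨x, hx, hdx, hle⟩ := hdom a hφa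
    exact Set.mem_biUnion ⟨hx, le_trans ha hle⟩ (mem_ball.2 hdx)
  have hcount : volume E ≤ V * N := by
    by_cases hYfin : Y.Finite
    · calc volume E ≤ volume (⋃ x ∈ hYfin.toFinset, ball x 1) := by
            refine measure_mono (hcover.trans ?_)
            intro a ha
            simp only [Set.mem_iUnion, Set.Finite.mem_toFinset] at *
            exact ha
        _ ≤ ∑ x ∈ hYfin.toFinset, volume (ball x 1) := measure_biUnion_finset_le _ _
        _ = ∑ _x ∈ hYfin.toFinset, V := by
            refine Finset.sum_congr rfl fun x _ => ?_
            rw [hVdef]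
            exact Measure.addHaar_ball_center volume x 1
        _ = (hYfin.toFinset.card : ℝ≥0∞) * V := by
            rw [Finset.sum_const, nsmul_eq_mul]
        _ ≤ V * N := by
            rw [mul_comm]
            refine mul_le_mul_right ?_ V
            exact le_iSup₂_of_le hYfin.toFinset
              (by rw [Set.Finite.coe_toFinset]) le_rfl
    · have hNtop : N = ⊤ := by
        by_contra hN
        obtain ⟨n, hn⟩ := ENNReal.exists_nat_gt hN
        obtain ⟨s, hsY, hsfin, hscard⟩ := (show Y.Infinite from hYfin).exists_subset_ncard_eq n
        have hle : (n : ℝ≥0∞) ≤ N := by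
          refine le_iSup₂_of_le hsfin.toFinset (by rw [Set.Finite.coe_toFinset]; exact hsY) ?_
          rw [← hscard, Set.ncard_eq_toFinset_card s hsfin]
        exact absurd (lt_of_le_of_lt hle hn) (lt_irrefl _)
      rw [hNtop, ENNReal.mul_top hV0]
      exact le_top
  -- combine
  have hfinal : (⨆ (F : Finset (EuclideanSpace ℝ (Fin d))) (_ : ↑F ⊆ X), ∑ x ∈ F, ψ x) +
      (t - t₂) * N ≤ ⨆ (F : Finset (EuclideanSpace ℝ (Fin d))) (_ : ↑F ⊆ X), ∑ x ∈ F, φ x := by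
    rw [hNdef, ENNReal.mul_iSup]
    simp only [ENNReal.mul_iSup]
    refine ENNReal.biSup_add_biSup_le' (p := fun F : Finset (EuclideanSpace ℝ (Fin d)) => ↑F ⊆ X)
      (q := fun F : Finset (EuclideanSpace ℝ (Fin d)) => ↑F ⊆ Y)
      ⟨∅, by simp⟩ ⟨∅, by simp⟩ ?_
    intro F hF G hG
    have hGX : (G : Set (EuclideanSpace ℝ (Fin d))) ⊆ X := hG.trans fun x hx => hx.1
    refine le_iSup₂_of_le (F ∪ G) (by
      rw [Finset.coe_union]
      exact Set.union_subset hF hGX) ?_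
    have hsum1 : ∑ x ∈ F, ψ x ≤ ∑ x ∈ F ∪ G, ψ x :=
      Finset.sum_le_sum_of_subset Finset.subset_union_left
    have hsum2 : (t - t₂) * (G.card : ℝ≥0∞) ≤
        ∑ x ∈ F ∪ G, E.indicator (fun _ => t - t₂) x := by
      have : ∑ x ∈ G, E.indicator (fun _ => t - t₂) x = (t - t₂) * (G.card : ℝ≥0∞) := by
        rw [Finset.sum_congr rfl fun x hx => Set.indicator_of_mem (show x ∈ E from (hG hx).2) (fun _ => t - t₂)]
        rw [Finset.sum_const, nsmul_eq_mul, mul_comm]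
      rw [← this]
      exact Finset.sum_le_sum_of_subset Finset.subset_union_right
    calc (∑ x ∈ F, ψ x) + (t - t₂) * (G.card : ℝ≥0∞)
        ≤ (∑ x ∈ F ∪ G, ψ x) + ∑ x ∈ F ∪ G, E.indicator (fun _ => t - t₂) x :=
          add_le_add hsum1 hsum2
      _ = ∑ x ∈ F ∪ G, φ x := by
          rw [← Finset.sum_add_distrib]
          exact Finset.sum_congr rfl fun x _ => (hkey x).symm
  calc ∫⁻ a, φ a = ∫⁻ a, (ψ a + E.indicator (fun _ => t - t₂) a) := lintegral_congr hkey
    _ = (∫⁻ a, ψ a) + ∫⁻ a, E.indicator (fun _ => t - t₂) a := lintegral_add_left hψm _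
    _ = (∫⁻ a, ψ a) + (t - t₂) * volume E := by rw [lintegral_indicator_const hEm]
    _ ≤ V * (⨆ (F : Finset (EuclideanSpace ℝ (Fin d))) (_ : ↑F ⊆ X), ∑ x ∈ F, ψ x) +
        (t - t₂) * (V * N) := add_le_add hIH (mul_le_mul_right hcount _)
    _ = V * ((⨆ (F : Finset (EuclideanSpace ℝ (Fin d))) (_ : ↑F ⊆ X), ∑ x ∈ F, ψ x) +
        (t - t₂) * N) := by ring
    _ ≤ V * ⨆ (F : Finset (EuclideanSpace ℝ (Fin d))) (_ : ↑F ⊆ X), ∑ x ∈ F, φ x :=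
        mul_le_mul_right hfinal _

end Stmt1Aux

/-- For measurable `f : ℝ^d → ℝ`,
`∫_{ℝ^d \ B₁} |f| ≤ Vol(B₁) · sup_{X ∈ C₀} ∑_{x ∈ X} |f x|`, where `C₀` is the
class of finite subsets of `ℝ^d \ B₁` whose points are pairwise at distance ≥ 1. -/
theorem stmt_1 (d : ℕ) (f : EuclideanSpace ℝ (Fin d) → ℝ) (hf : Measurable f) :
    ∫⁻ x in (ball (0 : EuclideanSpace ℝ (Fin d)) 1)ᶜ, ENNReal.ofReal |f x| ≤
      volume (ball (0 : EuclideanSpace ℝ (Fin d)) 1) *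
        ⨆ (X : Finset (EuclideanSpace ℝ (Fin d)))
          (_ : ↑X ⊆ (ball (0 : EuclideanSpace ℝ (Fin d)) 1)ᶜ ∧
            ∀ x ∈ X, ∀ y ∈ X, x ≠ y → 1 ≤ dist x y),
          ∑ x ∈ X, ENNReal.ofReal |f x| := by
  classical
  set A : Set (EuclideanSpace ℝ (Fin d)) := (ball (0 : EuclideanSpace ℝ (Fin d)) 1)ᶜ with hAdef
  have hAm : MeasurableSet A := measurableSet_ball.compl
  set g : EuclideanSpace ℝ (Fin d) → ℝ≥0∞ := fun x => ENNReal.ofReal |f x| with hgdef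
  have hgm : Measurable g := ENNReal.measurable_ofReal.comp hf.abs
  have hhm : Measurable (A.indicator g) := hgm.indicator hAm
  rw [← lintegral_indicator hAm]
  rw [lintegral_eq_iSup_eapprox_lintegral hhm]
  refine iSup_le fun n => ?_
  set φ := SimpleFunc.eapprox (A.indicator g) n with hφdef
  have hφle : ∀ a, φ a ≤ A.indicator g a := fun a => by
    rw [← SimpleFunc.iSup_eapprox_apply hhm]
    exact le_iSup (fun m => SimpleFunc.eapprox (A.indicator g) m a) n
  have hφA : ∀ a, φ a ≠ 0 → a ∈ A := by
    intro a h
    by_contra hA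
    exact h (le_antisymm (by simpa [Set.indicator_of_notMem hA] using hφle a) zero_le)
  obtain ⟨X, hXA, hXsep, hdom⟩ := exists_dom d φ.range φ hφA ∅ (Set.empty_subset _)
    (fun x hx => absurd hx (Set.notMem_empty x))
    (fun x hx => absurd hx (Set.notMem_empty x))
    (fun a ha hnot => absurd (SimpleFunc.mem_range_self φ a) hnot)
  rw [← SimpleFunc.lintegral_eq_lintegral φ volume]
  have hmain := main_est d φ.range φ φ.measurable
    (fun a _ => SimpleFunc.mem_range_self φ a) X hdom
  refine hmain.trans (mul_le_mul_right ?_ _)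
  refine iSup₂_le fun F hFX => ?_
  refine le_iSup₂_of_le F
    ⟨hFX.trans hXA, fun x hx y hy hxy => hXsep x (hFX hx) y (hFX hy) hxy⟩ ?_
  refine Finset.sum_le_sum fun x hx => ?_
  calc φ x ≤ A.indicator g x := hφle x
    _ = ENNReal.ofReal |f x| := by rw [Set.indicator_of_mem (hXA (hFX hx)) g]
end

section
/- Suppose g : ℝ^d → ℝ satisfies: g(x) = g(-x), g(x) ≥ -a > -1 for |x| ≥ 1, g(x) = -1 for |x| < 1, and sup_{X ∈ C₀} ∑_{x ∈ X} |g(x)| ≤ c < ∞. Then the hard core potential Φ(x) = -ln(g(x)+1) is stable: for all n and all x₁,…,xₙ ∈ ℝ^d, U(x₁,…,xₙ) = ∑_{1≤i<j≤n} Φ(xᵢ - xⱼ) ≥ -(c/2)·n. -/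
open Metric

/-- Under the hard-core assumptions on `g` (with `g(x) = e^{-Φ(x)} - 1`),
the potential `Φ(x) = -ln(g x + 1)` is stable: for configurations whose points are
pairwise at distance ≥ 1, `U(x₁,…,xₙ) = ∑_{i<j} Φ(xᵢ-xⱼ) ≥ -(c/2)·n`.
(Configurations with some pair at distance < 1 have `U = +∞` and trivially satisfy
the bound, so only 1-separated configurations need be considered.) -/
theorem stmt_2 (d : ℕ) (g : EuclideanSpace ℝ (Fin d) → ℝ) (a c : ℝ)
    (ha : a < 1)
    (heven : ∀ x, g (-x) = g x)
    (hge : ∀ x, 1 ≤ ‖x‖ → -a ≤ g x)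
    (hcore : ∀ x, ‖x‖ < 1 → g x = -1)
    (hsum : ∀ X : Finset (EuclideanSpace ℝ (Fin d)),
      (∀ x ∈ X, 1 ≤ ‖x‖) → (∀ x ∈ X, ∀ y ∈ X, x ≠ y → 1 ≤ dist x y) →
      ∑ x ∈ X, |g x| ≤ c)
    (n : ℕ) (x : Fin n → EuclideanSpace ℝ (Fin d))
    (hx : ∀ i j, i ≠ j → 1 ≤ dist (x i) (x j)) :
    -(c / 2) * n ≤
      ∑ p ∈ Finset.univ.filter (fun p : Fin n × Fin n => p.1 < p.2),
        (-Real.log (g (x p.1 - x p.2) + 1)) := by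
  classical
  set f : Fin n × Fin n → ℝ := fun p => |g (x p.1 - x p.2)| with hf
  set S : Finset (Fin n × Fin n) := Finset.univ.filter (fun p => p.1 < p.2) with hS
  set S' : Finset (Fin n × Fin n) := Finset.univ.filter (fun p => p.2 < p.1) with hS'
  -- each inner sum bound
  have hinner : ∀ i : Fin n, ∑ j ∈ Finset.univ.erase i, |g (x i - x j)| ≤ c := by
    intro i
    have hinj : Set.InjOn (fun j => x i - x j) (Finset.univ.erase i : Finset (Fin n)) := by
      intro j hj k hk hjk
      by_contra hne
      have h1 := hx j k hne
      have hxx : x j = x k := sub_right_inj.mp hjk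
      rw [hxx, dist_self] at h1; linarith
    rw [← Finset.sum_image (f := fun y => |g y|) (fun j hj k hk h => hinj hj hk h)]
    apply hsum
    · intro y hy
      simp only [Finset.mem_image, Finset.mem_erase] at hy
      obtain ⟨j, ⟨hji, _⟩, rfl⟩ := hy
      simpa [dist_eq_norm] using hx i j (Ne.symm hji)
    · intro y hy z hz hyz
      simp only [Finset.mem_image, Finset.mem_erase] at hy hz
      obtain ⟨j, ⟨hji, _⟩, rfl⟩ := hy
      obtain ⟨k, ⟨hki, _⟩, rfl⟩ := hz
      have hjk : j ≠ k := fun h => hyz (by rw [h])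
      have hd : dist (x i - x j) (x i - x k) = dist (x k) (x j) := by
        rw [dist_eq_norm, dist_eq_norm]; congr 1; abel
      rw [hd]; exact hx k j (Ne.symm hjk)
  -- total double sum bound
  have hT : ∑ p ∈ Finset.univ.filter (fun p : Fin n × Fin n => p.1 ≠ p.2), f p ≤ c * n := by
    have heq : ∑ p ∈ Finset.univ.filter (fun p : Fin n × Fin n => p.1 ≠ p.2), f p
        = ∑ i : Fin n, ∑ j ∈ Finset.univ.erase i, |g (x i - x j)| := by
      rw [Finset.sum_filter, Fintype.sum_prod_type]
      refine Finset.sum_congr rfl fun i _ => ?_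
      rw [← Finset.sum_filter]
      congr 1
      ext j
      simp [ne_comm]
    rw [heq]
    calc ∑ i : Fin n, ∑ j ∈ Finset.univ.erase i, |g (x i - x j)|
        ≤ ∑ _i : Fin n, c := Finset.sum_le_sum fun i _ => hinner i
      _ = c * n := by simp [mul_comm]
  -- symmetry: sum over S equals sum over S'
  have hsym : ∑ p ∈ S, f p = ∑ p ∈ S', f p := by
    apply Finset.sum_nbij' (fun p => Prod.swap p) (fun p => Prod.swap p)
    · intro p hp; simp only [hS, hS', Finset.mem_filter, Finset.mem_univ, true_and] at hp ⊢
      exact hp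
    · intro p hp; simp only [hS, hS', Finset.mem_filter, Finset.mem_univ, true_and] at hp ⊢
      exact hp
    · intro p _; simp
    · intro p _; simp
    · intro p _
      simp only [hf, Prod.fst_swap, Prod.snd_swap]
      rw [← heven (x p.1 - x p.2), neg_sub]
  -- split
  have hsplit : ∑ p ∈ S, f p + ∑ p ∈ S', f p
      = ∑ p ∈ Finset.univ.filter (fun p : Fin n × Fin n => p.1 ≠ p.2), f p := by
    rw [← Finset.sum_union]
    · congr 1
      ext p
      simp only [hS, hS', Finset.mem_union, Finset.mem_filter, Finset.mem_univ, true_and]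
      constructor
      · rintro (h | h)
        · exact ne_of_lt h
        · exact (ne_of_lt h).symm
      · intro h; exact lt_or_gt_of_ne h
    · rw [Finset.disjoint_filter]
      intro p _ h1 h2
      exact absurd h2 (not_lt.mpr (le_of_lt h1))
  have hSbound : ∑ p ∈ S, f p ≤ c * n / 2 := by
    have : 2 * ∑ p ∈ S, f p ≤ c * n := by
      rw [two_mul]; nth_rewrite 2 [hsym]; rw [hsplit]; exact hT
    linarith
  -- pointwise bound: -log(g+1) ≥ -|g|
  have hpt : ∀ p ∈ S, -f p ≤ -Real.log (g (x p.1 - x p.2) + 1) := by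
    intro p hp
    simp only [hS, Finset.mem_filter] at hp
    have hne : p.1 ≠ p.2 := ne_of_lt hp.2
    have hnorm : 1 ≤ ‖x p.1 - x p.2‖ := by
      simpa [dist_eq_norm] using hx p.1 p.2 hne
    have hgpos : 0 < g (x p.1 - x p.2) + 1 := by
      have := hge _ hnorm; linarith
    have hlog := Real.log_le_sub_one_of_pos hgpos
    have : Real.log (g (x p.1 - x p.2) + 1) ≤ |g (x p.1 - x p.2)| := by
      calc Real.log (g (x p.1 - x p.2) + 1) ≤ g (x p.1 - x p.2) + 1 - 1 := hlog
        _ = g (x p.1 - x p.2) := by ring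
        _ ≤ |g (x p.1 - x p.2)| := le_abs_self _
    simpa [hf] using neg_le_neg this
  calc -(c / 2) * n = -(c * n / 2) := by ring
    _ ≤ -∑ p ∈ S, f p := neg_le_neg hSbound
    _ = ∑ p ∈ S, -f p := by rw [Finset.sum_neg_distrib]
    _ ≤ _ := Finset.sum_le_sum hpt
end

section
/- Suppose g : ℝ^d → ℝ satisfies g(x) = -1 for |x| < 1 and sup_{X ∈ C₀} ∑_{x ∈ X} |g(x)| ≤ c < ∞. Then the potential Φ(x) = -ln(g(x)+1) is regular: ∫_{ℝ^d} |e^{-Φ(x)} - 1| dx < ∞. -/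
open Metric MeasureTheory Set ENNReal NNReal

section Aux
variable {d : ℕ}

local notation "E" => EuclideanSpace ℝ (Fin d)

-- coordinate bound
lemma aux_abs_le_norm (x : E) (i : Fin d) : |x i| ≤ ‖x‖ := by
  rw [EuclideanSpace.norm_eq]
  have h1 : |x i| = Real.sqrt (|x i| ^ 2) := by
    rw [Real.sqrt_sq (abs_nonneg _)]
  rw [h1]
  apply Real.sqrt_le_sqrt
  have h2 : |x i| ^ 2 = ‖x i‖ ^ 2 := by rw [Real.norm_eq_abs]
  rw [h2]
  exact Finset.single_le_sum (f := fun j => ‖x j‖ ^ 2) (fun j _ => by positivity)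
    (Finset.mem_univ i)

-- the lattice vector
noncomputable def lvec (k : Fin d → ℤ) : E := WithLp.toLp 2 (fun i => 2 * (k i : ℝ))

lemma lvec_apply (k : Fin d → ℤ) (i : Fin d) : lvec k i = 2 * (k i : ℝ) := rfl

lemma lvec_inj : Function.Injective (lvec (d := d)) := by
  intro k k' h
  funext i
  have := congrArg (fun v : E => v i) h
  simp only [lvec_apply] at this
  exact_mod_cast (mul_left_cancel₀ (two_ne_zero) this)

lemma lvec_dist (k k' : Fin d → ℤ) (h : k ≠ k') (y : E) :
    1 ≤ dist (y + lvec k) (y + lvec k') := by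
  obtain ⟨i, hi⟩ : ∃ i, k i ≠ k' i := by
    by_contra hc; push_neg at hc; exact h (funext hc)
  have h1 : (1 : ℝ) ≤ |((y + lvec k) - (y + lvec k')) i| := by
    have : ((y + lvec k) - (y + lvec k')) i = 2 * ((k i : ℝ) - (k' i : ℝ)) := by
      simp [lvec_apply]; ring
    rw [this, abs_mul, abs_two]
    have : (1 : ℝ) ≤ |(k i : ℝ) - (k' i : ℝ)| := by
      rw [← Int.cast_sub, ← Int.cast_abs]
      exact_mod_cast Int.one_le_abs (sub_ne_zero.mpr hi)
    nlinarith [abs_nonneg ((k i : ℝ) - (k' i : ℝ))]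
  calc (1:ℝ) ≤ |((y + lvec k) - (y + lvec k')) i| := h1
    _ ≤ ‖(y + lvec k) - (y + lvec k')‖ := aux_abs_le_norm _ i
    _ = dist (y + lvec k) (y + lvec k') := (dist_eq_norm _ _).symm

end Aux

section Aux2
variable {d : ℕ} {g : EuclideanSpace ℝ (Fin d) → ℝ} {c : ℝ}

noncomputable def FF (g : EuclideanSpace ℝ (Fin d) → ℝ) (x : EuclideanSpace ℝ (Fin d)) : ℝ≥0∞ :=
  if 1 ≤ ‖x‖ then ((‖g x‖₊ : ℝ≥0∞)) else 0

lemma FF_meas (hg : Measurable g) : Measurable (FF g) := by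
  apply Measurable.ite _ hg.nnnorm.coe_nnreal_ennreal measurable_const
  exact (isClosed_le continuous_const continuous_norm).measurableSet

lemma FF_tsum_le
    (hsum : ∀ X : Finset (EuclideanSpace ℝ (Fin d)),
      (∀ x ∈ X, 1 ≤ ‖x‖) → (∀ x ∈ X, ∀ y ∈ X, x ≠ y → 1 ≤ dist x y) →
      ∑ x ∈ X, |g x| ≤ c) (y : EuclideanSpace ℝ (Fin d)) :
    ∑' k : Fin d → ℤ, FF g (y + lvec k) ≤ ENNReal.ofReal c := by
  rw [ENNReal.tsum_eq_iSup_sum]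
  apply iSup_le
  intro s
  classical
  set t := s.filter (fun k => 1 ≤ ‖y + lvec k‖) with ht
  have hinj : ∀ k ∈ t, ∀ k' ∈ t, y + lvec k = y + lvec k' → k = k' := by
    intro k _ k' _ h
    exact lvec_inj (add_left_cancel h)
  have h1 : ∑ k ∈ s, FF g (y + lvec k) = ∑ k ∈ t, ((‖g (y + lvec k)‖₊ : ℝ≥0∞)) := by
    rw [ht, Finset.sum_filter]
    rfl
  rw [h1]
  have h2 : ∑ k ∈ t, ((‖g (y + lvec k)‖₊ : ℝ≥0∞))
      = ENNReal.ofReal (∑ k ∈ t, |g (y + lvec k)|) := by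
    rw [ENNReal.ofReal_sum_of_nonneg (fun k _ => abs_nonneg _)]
    exact Finset.sum_congr rfl fun k _ => Real.enorm_eq_ofReal_abs _
  rw [h2]
  apply ENNReal.ofReal_le_ofReal
  have h3 : ∑ k ∈ t, |g (y + lvec k)| = ∑ x ∈ t.image (fun k => y + lvec k), |g x| :=
    (Finset.sum_image (f := fun x => |g x|) hinj).symm
  rw [h3]
  apply hsum
  · intro x hx
    obtain ⟨k, hk, rfl⟩ := Finset.mem_image.mp hx
    exact (Finset.mem_filter.mp hk).2
  · intro x hx x' hx' hne
    obtain ⟨k, hk, rfl⟩ := Finset.mem_image.mp hx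
    obtain ⟨k', hk', rfl⟩ := Finset.mem_image.mp hx'
    exact lvec_dist k k' (fun h => hne (by rw [h])) y

end Aux2

section Aux3
variable {d : ℕ}

def cube (d : ℕ) : Set (EuclideanSpace ℝ (Fin d)) := {y | ∀ i, y i ∈ Ico (0:ℝ) 2}

lemma cube_meas : MeasurableSet (cube d) := by
  have : cube d = ⋂ i, (fun y : EuclideanSpace ℝ (Fin d) => y i) ⁻¹' Ico (0:ℝ) 2 := by
    ext y; simp [cube, mem_iInter]
  rw [this]
  exact MeasurableSet.iInter fun i => ((measurable_pi_apply i).comp (WithLp.measurable_ofLp 2 _)) measurableSet_Ico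

lemma cube_bounded : Bornology.IsBounded (cube d) := by
  rw [Metric.isBounded_iff_subset_closedBall 0]
  refine ⟨Real.sqrt (4 * d), fun y hy => ?_⟩
  rw [mem_closedBall_zero_iff, EuclideanSpace.norm_eq]
  apply Real.sqrt_le_sqrt
  calc ∑ i, ‖y i‖ ^ 2 ≤ ∑ _i : Fin d, 4 := by
        apply Finset.sum_le_sum
        intro i _
        have h := hy i
        have h1 : |y i| ≤ 2 := by
          rw [abs_le]; constructor <;> [linarith [h.1]; linarith [h.2]]
        rw [Real.norm_eq_abs]
        nlinarith [abs_nonneg (y i)]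
    _ = 4 * d := by simp [mul_comm]

lemma cube_vol_lt_top : volume (cube d) < ⊤ :=
  cube_bounded.measure_lt_top

def piece (k : Fin d → ℤ) : Set (EuclideanSpace ℝ (Fin d)) :=
  (fun y => y + (-lvec k)) ⁻¹' cube d

lemma piece_meas (k : Fin d → ℤ) : MeasurableSet (piece k) :=
  (measurable_add_const _) cube_meas

lemma mem_piece {k : Fin d → ℤ} {y : EuclideanSpace ℝ (Fin d)} :
    y ∈ piece k ↔ ∀ i, y i - 2 * (k i : ℝ) ∈ Ico (0:ℝ) 2 := by
  simp only [piece, mem_preimage, cube, mem_setOf_eq]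
  constructor <;> intro h i <;> have := h i <;>
    simpa [lvec_apply, sub_eq_add_neg] using this

lemma piece_cover : ⋃ k : Fin d → ℤ, piece k = univ := by
  ext y
  simp only [mem_iUnion, mem_univ, iff_true]
  refine ⟨fun i => ⌊y i / 2⌋, mem_piece.mpr fun i => ?_⟩
  have h0 := Int.fract_nonneg (y i / 2)
  have h1 := Int.fract_lt_one (y i / 2)
  rw [Int.fract] at h0 h1
  constructor <;> [linarith; linarith]

lemma piece_disjoint : Pairwise (Function.onFun Disjoint (piece (d := d))) := by
  intro k k' hne
  rw [Function.onFun, Set.disjoint_left]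
  intro y hy hy'
  apply hne
  funext i
  have h1 := (mem_piece.mp hy) i
  have h2 := (mem_piece.mp hy') i
  have hk : ((k i : ℝ)) < k' i + 1 := by
    rcases h1 with ⟨a1, a2⟩; rcases h2 with ⟨b1, b2⟩; linarith
  have hk' : ((k' i : ℝ)) < k i + 1 := by
    rcases h1 with ⟨a1, a2⟩; rcases h2 with ⟨b1, b2⟩; linarith
  have : k i < k' i + 1 := by exact_mod_cast hk
  have : k' i < k i + 1 := by exact_mod_cast hk'
  omega

lemma lintegral_piece (F : EuclideanSpace ℝ (Fin d) → ℝ≥0∞) (k : Fin d → ℤ) :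
    ∫⁻ y in piece k, F y = ∫⁻ y in cube d, F (y + lvec k) := by
  have h := (measurePreserving_add_right (volume : Measure (EuclideanSpace ℝ (Fin d)))
      (-lvec k)).setLIntegral_comp_preimage_emb (measurableEmbedding_addRight (-lvec k))
      (fun y => F (y + lvec k)) (cube d)
  rw [← h]
  apply setLIntegral_congr_fun (piece_meas k)
  intro y _
  simp [neg_add_cancel_right]

lemma lintegral_decomp (F : EuclideanSpace ℝ (Fin d) → ℝ≥0∞) (hF : Measurable F) :
    ∫⁻ y, F y = ∑' k : Fin d → ℤ, ∫⁻ y in cube d, F (y + lvec k) := by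
  conv_lhs => rw [← setLIntegral_univ, ← piece_cover]
  rw [lintegral_iUnion piece_meas piece_disjoint]
  exact tsum_congr fun k => lintegral_piece F k

end Aux3

/-- Under the hard-core assumptions, the potential `Φ = -ln(g+1)` is
regular: `∫_{ℝ^d} |e^{-Φ(x)} - 1| dx < ∞`.  Since `e^{-Φ(x)} - 1 = g x`
(including on the core, where `e^{-∞} - 1 = -1 = g x`), regularity is exactly the
integrability of `g`. -/
theorem stmt_3 (d : ℕ) (g : EuclideanSpace ℝ (Fin d) → ℝ) (c : ℝ)
    (hg : Measurable g)
    (hcore : ∀ x, ‖x‖ < 1 → g x = -1)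
    (hsum : ∀ X : Finset (EuclideanSpace ℝ (Fin d)),
      (∀ x ∈ X, 1 ≤ ‖x‖) → (∀ x ∈ X, ∀ y ∈ X, x ≠ y → 1 ≤ dist x y) →
      ∑ x ∈ X, |g x| ≤ c) :
    Integrable g volume := by
  refine ⟨hg.aestronglyMeasurable, ?_⟩
  have hball : MeasurableSet (ball (0 : EuclideanSpace ℝ (Fin d)) 1) := measurableSet_ball
  rw [HasFiniteIntegral, ← lintegral_add_compl _ hball]
  apply ENNReal.add_lt_top.mpr
  constructor
  · have h1 : ∫⁻ y in ball (0 : EuclideanSpace ℝ (Fin d)) 1, ‖g y‖ₑ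
        = ∫⁻ _y in ball (0 : EuclideanSpace ℝ (Fin d)) 1, 1 := by
      apply setLIntegral_congr_fun hball
      intro y hy; dsimp only
      rw [hcore y (mem_ball_zero_iff.mp hy)]
      simp
    rw [h1, setLIntegral_one]
    exact measure_ball_lt_top
  · calc ∫⁻ y in (ball (0 : EuclideanSpace ℝ (Fin d)) 1)ᶜ, ‖g y‖ₑ
        = ∫⁻ y in (ball (0 : EuclideanSpace ℝ (Fin d)) 1)ᶜ, FF g y := by
          apply setLIntegral_congr_fun hball.compl
          intro y hy
          have : 1 ≤ ‖y‖ := by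
            rw [mem_compl_iff, mem_ball_zero_iff] at hy
            linarith [not_lt.mp hy]
          rw [FF, if_pos this]; rfl
      _ ≤ ∫⁻ y, FF g y := setLIntegral_le_lintegral _ _
      _ = ∑' k : Fin d → ℤ, ∫⁻ y in cube d, FF g (y + lvec k) :=
          lintegral_decomp _ (FF_meas hg)
      _ = ∫⁻ y in cube d, ∑' k : Fin d → ℤ, FF g (y + lvec k) :=
          (lintegral_tsum fun k =>
            ((FF_meas hg).comp (measurable_add_const _)).aemeasurable).symm
      _ ≤ ∫⁻ _y in cube d, ENNReal.ofReal c := lintegral_mono fun y => FF_tsum_le hsum y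
      _ = ENNReal.ofReal c * volume (cube d) := setLIntegral_const _ _
      _ < ⊤ := ENNReal.mul_lt_top ENNReal.ofReal_lt_top cube_vol_lt_top
end

section
/- Define φ̃_X = ψ⁻¹ ∗ D_X ψ where ψ is the sequence of Boltzmann factors ψₘ(x₁,…,xₘ) = e^{-U(x₁,…,xₘ)} (ψ₀ = 1), D_X the shift operator (D_X ψ)ₙ(y₁,…,yₙ) = ψ_{|X|+n}(X, y₁,…,yₙ), and ψ⁻¹ the ∗-inverse of ψ. Then for a single point x₁: φ̃_{(x₁)}(y₁,…,yₙ) = φ_{1+n}(x₁,y₁,…,yₙ), where φ = Γ⁻¹ψ is the sequence of Ursell functions. -/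
open Finset

noncomputable section

abbrev SeqFun (d : ℕ) := (n : ℕ) → (Fin n → EuclideanSpace ℝ (Fin d)) → ℝ

def subseqVals {d n : ℕ} (X : Fin n → EuclideanSpace ℝ (Fin d)) (S : Finset (Fin n)) :
    Fin S.card → EuclideanSpace ℝ (Fin d) :=
  fun i => X ((S.orderIsoOfFin rfl i : Fin n))

def conv {d : ℕ} (f g : SeqFun d) : SeqFun d := fun n X =>
  ∑ S : Finset (Fin n), f S.card (subseqVals X S) * g Sᶜ.card (subseqVals X Sᶜ)

def oneSeq (d : ℕ) : SeqFun d := fun n _ => if n = 0 then 1 else 0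

def convPow {d : ℕ} (f : SeqFun d) : ℕ → SeqFun d
  | 0 => oneSeq d
  | k + 1 => conv f (convPow f k)

/-- `Γ⁻¹(𝟏 + φ')`, acting on the `A₊`-part `φ'` (terminating series). -/
def GammaInv {d : ℕ} (f : SeqFun d) : SeqFun d := fun n X =>
  ∑ k ∈ Finset.Icc 1 n, ((-1 : ℝ)) ^ (k + 1) / (k : ℝ) * convPow f k n X

/-- Total energy `U(x₁,…,xₙ) = ∑_{i<j} Φ(xᵢ - xⱼ)`. -/
def energy {d n : ℕ} (Φ : EuclideanSpace ℝ (Fin d) → ℝ)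
    (X : Fin n → EuclideanSpace ℝ (Fin d)) : ℝ :=
  ∑ p ∈ Finset.univ.filter (fun p : Fin n × Fin n => p.1 < p.2), Φ (X p.1 - X p.2)

/-- The sequence of Boltzmann factors `ψₘ(x₁,…,xₘ) = e^{-U(x₁,…,xₘ)}` (`ψ₀ = 1`). -/
def boltzmann {d : ℕ} (Φ : EuclideanSpace ℝ (Fin d) → ℝ) : SeqFun d :=
  fun _ X => Real.exp (-energy Φ X)

namespace Stmt12Aux



def M (N : ℕ) : Type := Finset (Fin N) → ℝ

namespace M

variable {N : ℕ}

instance : AddCommGroup (M N) := Pi.addCommGroup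

lemma add_apply (a b : M N) (S : Finset (Fin N)) : (a + b) S = a S + b S := rfl
lemma sub_apply (a b : M N) (S : Finset (Fin N)) : (a - b) S = a S - b S := rfl
lemma zero_apply (S : Finset (Fin N)) : (0 : M N) S = 0 := rfl

instance : Mul (M N) := ⟨fun a b S => ∑ T ∈ S.powerset, a T * b (S \ T)⟩

lemma mul_apply (a b : M N) (S : Finset (Fin N)) :
    (a * b) S = ∑ T ∈ S.powerset, a T * b (S \ T) := rfl

instance : One (M N) := ⟨fun S => if S = ∅ then 1 else 0⟩

lemma one_apply (S : Finset (Fin N)) : (1 : M N) S = if S = ∅ then 1 else 0 := rfl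

lemma mul_comm' (a b : M N) : a * b = b * a := by
  funext S
  rw [mul_apply, mul_apply]
  refine Finset.sum_nbij' (fun T => S \ T) (fun T => S \ T) ?_ ?_ ?_ ?_ ?_
  · intro T hT; exact mem_powerset.2 sdiff_subset
  · intro T hT; exact mem_powerset.2 sdiff_subset
  · intro T hT; exact Finset.sdiff_sdiff_eq_self (mem_powerset.1 hT)
  · intro T hT; exact Finset.sdiff_sdiff_eq_self (mem_powerset.1 hT)
  · intro T hT
    rw [Finset.sdiff_sdiff_eq_self (mem_powerset.1 hT), mul_comm]

lemma mul_assoc' (a b c : M N) : a * b * c = a * (b * c) := by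
  funext S
  rw [mul_apply, mul_apply]
  simp only [mul_apply, Finset.sum_mul, Finset.mul_sum]
  rw [Finset.sum_sigma', Finset.sum_sigma']
  refine Finset.sum_nbij' (fun p => ⟨p.2, p.1 \ p.2⟩) (fun p => ⟨p.1 ∪ p.2, p.1⟩) ?_ ?_ ?_ ?_ ?_
  · rintro ⟨T, U⟩ hp
    rw [Finset.mem_sigma, mem_powerset, mem_powerset] at hp ⊢
    exact ⟨hp.2.trans hp.1, Finset.sdiff_subset_sdiff hp.1 (le_refl _)⟩
  · rintro ⟨U, V⟩ hp
    rw [Finset.mem_sigma, mem_powerset, mem_powerset] at hp ⊢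
    have hV : V ⊆ S := hp.2.trans sdiff_subset
    exact ⟨union_subset hp.1 hV, subset_union_left⟩
  · rintro ⟨T, U⟩ hp
    rw [Finset.mem_sigma, mem_powerset, mem_powerset] at hp
    show (⟨U ∪ T \ U, U⟩ : Σ _ : Finset (Fin N), Finset (Fin N)) = ⟨T, U⟩
    rw [Finset.union_sdiff_of_subset hp.2]
  · rintro ⟨U, V⟩ hp
    rw [Finset.mem_sigma, mem_powerset, mem_powerset] at hp
    have hd : Disjoint U V := disjoint_sdiff.mono_right hp.2
    show (⟨U, (U ∪ V) \ U⟩ : Σ _ : Finset (Fin N), Finset (Fin N)) = ⟨U, V⟩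
    rw [Finset.union_sdiff_cancel_left hd]
  · rintro ⟨T, U⟩ hp
    rw [Finset.mem_sigma, mem_powerset, mem_powerset] at hp
    have h1 : (S \ U) \ (T \ U) = S \ T := by
      rw [sdiff_sdiff_left]
      congr 1
      rw [sup_eq_union, Finset.union_comm, Finset.sdiff_union_of_subset hp.2]
    show a U * b (T \ U) * c (S \ T) = a U * (b (T \ U) * c ((S \ U) \ (T \ U)))
    rw [h1, mul_assoc]

lemma one_mul' (a : M N) : 1 * a = a := by
  funext S
  rw [mul_apply]
  rw [Finset.sum_eq_single ∅]
  · rw [one_apply, if_pos rfl, one_mul, sdiff_empty]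
  · intro T _ hT; rw [one_apply, if_neg hT, zero_mul]
  · intro h; exact absurd (empty_mem_powerset S) h

lemma mul_one' (a : M N) : a * 1 = a := by
  rw [mul_comm', one_mul']

lemma zero_mul' (a : M N) : 0 * a = 0 := by
  funext S; rw [mul_apply]; exact Finset.sum_eq_zero fun T _ => zero_mul _

lemma mul_zero' (a : M N) : a * 0 = 0 := by
  funext S; rw [mul_apply]; exact Finset.sum_eq_zero fun T _ => mul_zero _

lemma left_distrib' (a b c : M N) : a * (b + c) = a * b + a * c := by
  funext S
  rw [add_apply, mul_apply, mul_apply, mul_apply, ← Finset.sum_add_distrib]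
  exact Finset.sum_congr rfl fun T _ => by rw [add_apply, mul_add]

lemma right_distrib' (a b c : M N) : (a + b) * c = a * c + b * c := by
  rw [mul_comm', left_distrib', mul_comm' c a, mul_comm' c b]

instance : CommRing (M N) :=
  { (inferInstance : AddCommGroup (M N)) with
    mul := (· * ·)
    one := 1
    mul_assoc := mul_assoc'
    one_mul := one_mul'
    mul_one := mul_one'
    zero_mul := zero_mul'
    mul_zero := mul_zero'
    left_distrib := left_distrib'
    right_distrib := right_distrib'
    mul_comm := mul_comm' }


instance : Module ℝ (M N) := Pi.module _ _ _

lemma smul_apply (r : ℝ) (a : M N) (S : Finset (Fin N)) : (r • a) S = r * a S := rfl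

lemma smul_mul (r : ℝ) (a b : M N) : (r • a) * b = r • (a * b) := by
  funext S
  rw [smul_apply, mul_apply, mul_apply, Finset.mul_sum]
  exact Finset.sum_congr rfl fun T _ => by rw [smul_apply]; ring

lemma mul_smul_comm' (r : ℝ) (a b : M N) : a * (r • b) = r • (a * b) := by
  rw [mul_comm' a, smul_mul, mul_comm' b a]

/-- The "pick the distinguished point" derivation. -/
def der (z : Fin N) (a : M N) : M N := fun S => if z ∈ S then a S else 0

lemma der_apply (z : Fin N) (a : M N) (S : Finset (Fin N)) :
    der z a S = if z ∈ S then a S else 0 := rfl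

lemma der_one (z : Fin N) : der z (1 : M N) = 0 := by
  funext S
  rw [der_apply, zero_apply]
  split
  · rw [one_apply, if_neg (ne_empty_of_mem (by assumption))]
  · rfl

lemma der_sub (z : Fin N) (a b : M N) : der z (a - b) = der z a - der z b := by
  funext S
  rw [der_apply, sub_apply, sub_apply, der_apply, der_apply]
  split <;> simp

lemma der_smul (z : Fin N) (r : ℝ) (a : M N) : der z (r • a) = r • der z a := by
  funext S
  rw [der_apply, smul_apply, smul_apply, der_apply]
  split <;> simp

lemma der_mul (z : Fin N) (a b : M N) :
    der z (a * b) = der z a * b + a * der z b := by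
  funext S
  rw [add_apply, der_apply, mul_apply, mul_apply, mul_apply, ← Finset.sum_add_distrib]
  by_cases hz : z ∈ S
  · rw [if_pos hz]
    refine Finset.sum_congr rfl fun T hT => ?_
    rw [der_apply, der_apply]
    by_cases hzT : z ∈ T
    · rw [if_pos hzT, if_neg (fun h => (Finset.mem_sdiff.1 h).2 hzT), mul_zero, add_zero]
    · have : z ∈ S \ T := Finset.mem_sdiff.2 ⟨hz, hzT⟩
      rw [if_neg hzT, if_pos this, zero_mul, zero_add]
  · rw [if_neg hz]
    symm
    refine Finset.sum_eq_zero fun T hT => ?_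
    have hTS := Finset.mem_powerset.1 hT
    have h1 : z ∉ T := fun h => hz (hTS h)
    have h2 : z ∉ S \ T := fun h => hz (Finset.mem_sdiff.1 h).1
    rw [der_apply, der_apply, if_neg h1, if_neg h2, zero_mul, mul_zero, add_zero]

lemma der_pow (z : Fin N) (u : M N) : ∀ (k : ℕ), 1 ≤ k →
    der z (u ^ k) = (k : ℝ) • (u ^ (k - 1) * der z u) := by
  intro k
  induction k with
  | zero => omega
  | succ k ih =>
    intro _
    rcases Nat.eq_zero_or_pos k with rfl | hk
    · rw [pow_one, pow_zero, one_mul', Nat.cast_one, one_smul]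
    · rw [pow_succ, der_mul, ih hk, smul_mul]
      have h1 : u ^ (k - 1) * der z u * u = u ^ k * der z u := by
        rw [mul_assoc, mul_comm' (der z u) u, ← mul_assoc, ← pow_succ, Nat.sub_add_cancel hk]
      rw [h1, Nat.add_sub_cancel, Nat.cast_add, Nat.cast_one, add_smul, one_smul]

/-- Vanishing on sets of cardinality `< k`. -/
def Van (k : ℕ) (a : M N) : Prop := ∀ S : Finset (Fin N), S.card < k → a S = 0

lemma Van.mul {j k : ℕ} {a b : M N} (ha : Van j a) (hb : Van k b) :
    Van (j + k) (a * b) := by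
  intro S hS
  rw [mul_apply]
  refine Finset.sum_eq_zero fun T hT => ?_
  have hTS := Finset.mem_powerset.1 hT
  rcases lt_or_ge T.card j with h | h
  · rw [ha T h, zero_mul]
  · have h1 := Finset.card_sdiff_of_subset hTS
    have h2 := Finset.card_le_card hTS
    have : (S \ T).card < k := by omega
    rw [hb _ this, mul_zero]

lemma Van.pow {u : M N} (h : Van 1 u) : ∀ k, Van k (u ^ k)
  | 0 => fun S hS => absurd hS (by omega)
  | (k + 1) => by
    rw [pow_succ']
    have := h.mul (Van.pow h k)
    rwa [Nat.add_comm] at this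

lemma eq_zero_of_van {a : M N} (h : Van (N + 1) a) : a = 0 := by
  funext S
  exact h S (by have := Finset.card_le_univ S; rw [Fintype.card_fin] at this; omega)


lemma sum_apply' {ι : Type*} (s : Finset ι) (f : ι → M N) (S : Finset (Fin N)) :
    (∑ i ∈ s, f i) S = ∑ i ∈ s, f i S := by
  classical
  induction s using Finset.induction_on with
  | empty => rw [Finset.sum_empty, Finset.sum_empty]; rfl
  | insert a s' h ih => rw [Finset.sum_insert h, Finset.sum_insert h, add_apply, ih]

lemma mainAlg {n : ℕ} (P F : M (n + 1)) (hPF : P * F = 1) (hF0 : F ∅ = 1) :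
    (P * der 0 F) Finset.univ
      = ∑ k ∈ Finset.Icc 1 (n + 1), (-1 : ℝ) ^ (k + 1) / k * ((F - 1) ^ k) Finset.univ := by
  set u : M (n + 1) := F - 1 with hu
  have hu0 : u ∅ = 0 := by rw [hu, sub_apply, hF0, one_apply, if_pos rfl, sub_self]
  have hvu : Van 1 u := by
    intro S hS
    have h : S = ∅ := Finset.card_eq_zero.1 (by omega)
    rw [h, hu0]
  have hderFu : der 0 F = der 0 u := by
    rw [hu, der_sub, der_one, sub_zero]
  have hvd : Van 1 (der 0 u) := by
    intro S hS
    have h : S = ∅ := Finset.card_eq_zero.1 (by omega)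
    rw [h, der_apply, if_neg (Finset.notMem_empty _)]
  have hnil : u ^ (n + 1) * der 0 u = 0 := eq_zero_of_van ((hvu.pow (n + 1)).mul hvd)
  have hFu : F = 1 + u := by rw [hu]; ring
  have geom : F * (∑ j ∈ Finset.range (n + 1), (-u) ^ j) = 1 - (-u) ^ (n + 1) := by
    have h := geom_sum_mul (-u) (n + 1)
    rw [hFu]
    linear_combination -h
  have hnil' : (-u) ^ (n + 1) * der 0 u = 0 := by
    rw [neg_pow, mul_assoc, hnil, mul_zero]
  have key : P * der 0 F = (∑ j ∈ Finset.range (n + 1), (-u) ^ j) * der 0 u := by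
    calc P * der 0 F = P * der 0 u := by rw [hderFu]
    _ = P * (((1 : M (n + 1)) - (-u) ^ (n + 1)) * der 0 u) + P * ((-u) ^ (n + 1) * der 0 u) := by ring
    _ = P * ((F * (∑ j ∈ Finset.range (n + 1), (-u) ^ j)) * der 0 u) := by
        rw [geom, hnil', mul_zero, add_zero]
    _ = (P * F) * ((∑ j ∈ Finset.range (n + 1), (-u) ^ j) * der 0 u) := by ring
    _ = (∑ j ∈ Finset.range (n + 1), (-u) ^ j) * der 0 u := by rw [hPF, one_mul]
  rw [key]
  have neg_pow_smul : ∀ j : ℕ, (-u) ^ j = ((-1 : ℝ) ^ j) • u ^ j := by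
    intro j
    induction j with
    | zero => rw [pow_zero, pow_zero, pow_zero, one_smul]
    | succ j ih =>
      have h : u ^ j * -u = -(u ^ (j + 1)) := by rw [mul_neg, ← pow_succ]
      rw [pow_succ, ih, smul_mul, h, pow_succ ((-1 : ℝ)), mul_smul, neg_one_smul]
  rw [Finset.sum_mul, sum_apply']
  have hL : ∀ j ∈ Finset.range (n + 1), ((-u) ^ j * der 0 u) Finset.univ
      = (-1 : ℝ) ^ j * ((u ^ j * der 0 u) Finset.univ) := by
    intro j _
    rw [neg_pow_smul, smul_mul, smul_apply]
  have hR : ∀ k ∈ Finset.Icc 1 (n + 1), (-1 : ℝ) ^ (k + 1) / k * (u ^ k) Finset.univ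
      = (-1 : ℝ) ^ (k + 1) * ((u ^ (k - 1) * der 0 u) Finset.univ) := by
    intro k hk
    rw [Finset.mem_Icc] at hk
    have h1 : (u ^ k) Finset.univ = der 0 (u ^ k) Finset.univ := by
      rw [der_apply, if_pos (Finset.mem_univ _)]
    rw [h1, der_pow 0 u k hk.1, smul_apply]
    have hk0 : (k : ℝ) ≠ 0 := Nat.cast_ne_zero.2 (by omega)
    field_simp
  rw [Finset.sum_congr rfl hL, Finset.sum_congr rfl hR]
  refine Finset.sum_nbij' (fun j => j + 1) (fun k => k - 1) ?_ ?_ ?_ ?_ ?_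
  · intro j hj
    rw [Finset.mem_range] at hj
    rw [Finset.mem_Icc]
    omega
  · intro k hk
    rw [Finset.mem_Icc] at hk
    rw [Finset.mem_range]
    omega
  · intro j _; omega
  · intro k hk; rw [Finset.mem_Icc] at hk; omega
  · intro j _
    rw [Nat.add_sub_cancel]
    congr 1
    rw [pow_succ, pow_succ]
    ring

end M

abbrev E (d : ℕ) := EuclideanSpace ℝ (Fin d)

variable {d : ℕ}

lemma seq_congr (f : SeqFun d) {m m' : ℕ} (h : m = m') (v : Fin m' → E d) :
    f m (v ∘ Fin.cast h) = f m' v := by subst h; rfl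

lemma subseqVals_eq {N : ℕ} (X : Fin N → E d) (S : Finset (Fin N)) :
    subseqVals X S = X ∘ ⇑(S.orderEmbOfFin rfl) := by
  funext i
  simp only [subseqVals, Function.comp_apply, Finset.coe_orderIsoOfFin_apply]

lemma strictMono_cast {m m' : ℕ} (h : m = m') : StrictMono (Fin.cast h) :=
  fun _ _ hab => hab

lemma ev_map {N m : ℕ} (f : SeqFun d) (X : Fin N → E d) (e : Fin m ↪o Fin N)
    (S : Finset (Fin m)) :
    f (S.map e.toEmbedding).card (subseqVals X (S.map e.toEmbedding))
      = f S.card (subseqVals (X ∘ ⇑e) S) := by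
  have h : (S.map e.toEmbedding).card = S.card := Finset.card_map _
  rw [← seq_congr f h (subseqVals (X ∘ ⇑e) S)]
  congr 1
  rw [subseqVals_eq, subseqVals_eq]
  have hemb : ⇑((S.map e.toEmbedding).orderEmbOfFin rfl)
      = ⇑e ∘ ⇑(S.orderEmbOfFin rfl) ∘ Fin.cast h := by
    symm
    apply Finset.orderEmbOfFin_unique
    · intro i
      exact Finset.mem_map_of_mem _ (Finset.orderEmbOfFin_mem S rfl _)
    · exact e.strictMono.comp ((S.orderEmbOfFin rfl).strictMono.comp (strictMono_cast h))
  rw [hemb]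
  rfl

lemma ev_univ {N : ℕ} (f : SeqFun d) (X : Fin N → E d) :
    f (univ : Finset (Fin N)).card (subseqVals X univ) = f N X := by
  have h : (univ : Finset (Fin N)).card = N := Finset.card_fin N
  rw [← seq_congr f h X]
  congr 1
  rw [subseqVals_eq]
  have hemb : ⇑((univ : Finset (Fin N)).orderEmbOfFin rfl) = Fin.cast h := by
    symm
    apply Finset.orderEmbOfFin_unique
    · intro i; exact Finset.mem_univ _
    · exact strictMono_cast h
  rw [hemb]

lemma strictMono_cons_zero {m N : ℕ} (g : Fin m → Fin (N + 1)) (hg : StrictMono g)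
    (hpos : ∀ i, 0 < g i) :
    StrictMono (Fin.cons 0 g : Fin (m + 1) → Fin (N + 1)) := by
  intro a b hab
  induction b using Fin.cases with
  | zero => exact absurd hab (Fin.not_lt_zero a)
  | succ j =>
    rw [Fin.cons_succ]
    induction a using Fin.cases with
    | zero => rw [Fin.cons_zero]; exact hpos j
    | succ i =>
      rw [Fin.cons_succ]
      exact hg (Fin.succ_lt_succ_iff.1 hab)

lemma ev_insert_zero {n : ℕ} (f : SeqFun d) (x₁ : E d) (y : Fin n → E d)
    (W : Finset (Fin n)) :
    f (insert (0 : Fin (n + 1)) (W.map (Fin.succOrderEmb n).toEmbedding)).card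
        (subseqVals (Fin.cons x₁ y) (insert 0 (W.map (Fin.succOrderEmb n).toEmbedding)))
      = f (W.card + 1) (Fin.cons x₁ (subseqVals y W)) := by
  set T := insert (0 : Fin (n + 1)) (W.map (Fin.succOrderEmb n).toEmbedding) with hT
  have h0 : (0 : Fin (n + 1)) ∉ W.map (Fin.succOrderEmb n).toEmbedding := by
    simp only [Finset.mem_map]
    rintro ⟨x, _, hx⟩
    exact Fin.succ_ne_zero x hx
  have hc : T.card = W.card + 1 := by
    rw [hT, Finset.card_insert_of_notMem h0, Finset.card_map]
  rw [← seq_congr f hc (Fin.cons x₁ (subseqVals y W))]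
  congr 1
  rw [subseqVals_eq]
  have hemb : ⇑(T.orderEmbOfFin rfl)
      = (Fin.cons 0 (Fin.succ ∘ ⇑(W.orderEmbOfFin rfl)) : Fin (W.card + 1) → Fin (n + 1))
          ∘ Fin.cast hc := by
    symm
    apply Finset.orderEmbOfFin_unique
    · intro i
      simp only [Function.comp_apply]
      refine Fin.cases ?_ ?_ (Fin.cast hc i)
      · rw [Fin.cons_zero]; exact Finset.mem_insert_self _ _
      · intro j
        rw [Fin.cons_succ]
        exact Finset.mem_insert_of_mem
          (Finset.mem_map_of_mem _ (Finset.orderEmbOfFin_mem W rfl j))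
    · refine (strictMono_cons_zero _ ?_ ?_).comp (strictMono_cast hc)
      · exact fun a b hab => Fin.succ_lt_succ_iff.2 ((W.orderEmbOfFin rfl).strictMono hab)
      · intro i; exact Fin.succ_pos _
  rw [hemb]
  funext i
  simp only [Function.comp_apply]
  refine Fin.cases ?_ ?_ (Fin.cast hc i)
  · rw [Fin.cons_zero, Fin.cons_zero, Fin.cons_zero]
  · intro j
    simp [Fin.cons_succ, subseqVals_eq]

lemma map_orderEmb_compl {N : ℕ} (S : Finset (Fin N)) (T : Finset (Fin S.card)) :
    Tᶜ.map (S.orderEmbOfFin rfl).toEmbedding = S \ T.map (S.orderEmbOfFin rfl).toEmbedding := by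
  ext a
  simp only [Finset.mem_map, Finset.mem_compl, Finset.mem_sdiff,
    RelEmbedding.coe_toEmbedding]
  constructor
  · rintro ⟨i, hi, rfl⟩
    refine ⟨Finset.orderEmbOfFin_mem S rfl i, ?_⟩
    rintro ⟨j, hj, hji⟩
    cases (S.orderEmbOfFin rfl).injective hji
    exact hi hj
  · rintro ⟨haS, hnot⟩
    obtain ⟨i, rfl⟩ : ∃ i, S.orderEmbOfFin rfl i = a := by
      have hr := Finset.range_orderEmbOfFin S rfl
      have : a ∈ Set.range (S.orderEmbOfFin rfl) := by rw [hr]; exact haS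
      exact this
    exact ⟨i, fun hiT => hnot ⟨i, hiT, rfl⟩, rfl⟩

lemma compl_map_succ {n : ℕ} (S : Finset (Fin n)) :
    (S.map (Fin.succOrderEmb n).toEmbedding)ᶜ
      = insert 0 (Sᶜ.map (Fin.succOrderEmb n).toEmbedding) := by
  ext a
  refine Fin.cases ?_ ?_ a
  · simp only [Finset.mem_compl, Finset.mem_map, Finset.mem_insert]
    simp [Fin.succ_ne_zero]
  · intro i
    simp [Finset.mem_map, Fin.succ_ne_zero]


variable {d : ℕ}

def Ev {N : ℕ} (X : Fin N → E d) (f : SeqFun d) : M N := fun S => f S.card (subseqVals X S)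

lemma Ev_conv {N : ℕ} (f g : SeqFun d) (X : Fin N → E d) :
    Ev X (conv f g) = Ev X f * Ev X g := by
  funext S
  rw [M.mul_apply]
  show (∑ T : Finset (Fin S.card),
      f T.card (subseqVals (subseqVals X S) T) * g Tᶜ.card (subseqVals (subseqVals X S) Tᶜ))
    = ∑ T ∈ S.powerset, Ev X f T * Ev X g (S \ T)
  refine Finset.sum_nbij' (fun T => T.map (S.orderEmbOfFin rfl).toEmbedding)
      (fun T' => T'.preimage (S.orderEmbOfFin rfl) ((S.orderEmbOfFin rfl).injective.injOn))
      ?_ ?_ ?_ ?_ ?_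
  · intro T _
    rw [Finset.mem_powerset]
    intro a ha
    rw [Finset.mem_map] at ha
    obtain ⟨i, _, rfl⟩ := ha
    exact Finset.orderEmbOfFin_mem S rfl i
  · intro T' _
    exact Finset.mem_univ _
  · intro T _
    ext i
    simp [Finset.mem_preimage, Finset.mem_map, (S.orderEmbOfFin rfl).injective.eq_iff]
  · intro T' hT'
    rw [Finset.mem_powerset] at hT'
    ext a
    simp only [Finset.mem_map, Finset.mem_preimage, RelEmbedding.coe_toEmbedding]
    constructor
    · rintro ⟨i, hi, rfl⟩
      exact hi
    · intro ha
      obtain ⟨i, rfl⟩ : ∃ i, S.orderEmbOfFin rfl i = a := by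
        have hr := Finset.range_orderEmbOfFin S rfl
        have : a ∈ Set.range (S.orderEmbOfFin rfl) := by rw [hr]; exact hT' ha
        exact this
      exact ⟨i, ha, rfl⟩
  · intro T _
    rw [subseqVals_eq X S]
    rw [← ev_map f X (S.orderEmbOfFin rfl) T, ← ev_map g X (S.orderEmbOfFin rfl) Tᶜ,
      map_orderEmb_compl]
    rfl

lemma Ev_oneSeq {N : ℕ} (X : Fin N → E d) : Ev X (oneSeq d) = 1 := by
  funext S
  show (if S.card = 0 then (1 : ℝ) else 0) = (1 : M N) S
  rw [M.one_apply]
  simp [Finset.card_eq_zero]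

lemma Ev_sub {N : ℕ} (X : Fin N → E d) (f g : SeqFun d) :
    Ev X (f - g) = Ev X f - Ev X g := rfl

lemma Ev_convPow {N : ℕ} (X : Fin N → E d) (f : SeqFun d) :
    ∀ k, Ev X (convPow f k) = Ev X f ^ k
  | 0 => by
    rw [pow_zero]
    exact Ev_oneSeq X
  | (k + 1) => by
    show Ev X (conv f (convPow f k)) = _
    rw [Ev_conv, Ev_convPow X f k, pow_succ']

lemma energy_zero_card (Φ : E d → ℝ) {m : ℕ} (hm : m = 0) (v : Fin m → E d) :
    energy Φ v = 0 := by
  subst hm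
  simp [energy]

end Stmt12Aux

open Stmt12Aux

set_option maxHeartbeats 2000000 in
/-- with `ψ` the Boltzmann factors, `ψ⁻¹` its `∗`-inverse, and
`(D_{x₁}ψ)ₙ(y₁,…,yₙ) = ψ_{1+n}(x₁,y₁,…,yₙ)`, the function
`φ̃_{(x₁)} = ψ⁻¹ ∗ D_{x₁}ψ` satisfies
`φ̃_{(x₁)}(y₁,…,yₙ) = φ_{1+n}(x₁,y₁,…,yₙ)`, where `φ = Γ⁻¹ψ` is the sequence of
Ursell functions. -/
theorem stmt_12 (d : ℕ) (Φ : EuclideanSpace ℝ (Fin d) → ℝ)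
    (psiInv : SeqFun d)
    (hinv : conv psiInv (boltzmann Φ) = oneSeq d)
    (x₁ : EuclideanSpace ℝ (Fin d)) (n : ℕ)
    (y : Fin n → EuclideanSpace ℝ (Fin d)) :
    conv psiInv (fun k Y => boltzmann Φ (k + 1) (Fin.cons x₁ Y)) n y =
      GammaInv (boltzmann Φ - oneSeq d) (n + 1) (Fin.cons x₁ y) := by
  classical
  have hF0 : Ev (Fin.cons x₁ y) (boltzmann Φ) (∅ : Finset (Fin (n + 1))) = 1 := by
    show Real.exp (-energy Φ (subseqVals (Fin.cons x₁ y) (∅ : Finset (Fin (n + 1))))) = 1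
    rw [energy_zero_card Φ (Finset.card_empty) _, neg_zero, Real.exp_zero]
  have hPF : Ev (Fin.cons x₁ y) psiInv * Ev (Fin.cons x₁ y) (boltzmann Φ) = 1 := by
    rw [← Ev_conv, hinv, Ev_oneSeq]
  have halg := M.mainAlg (Ev (Fin.cons x₁ y) psiInv) (Ev (Fin.cons x₁ y) (boltzmann Φ)) hPF hF0
  have hRHS : GammaInv (boltzmann Φ - oneSeq d) (n + 1) (Fin.cons x₁ y)
      = ∑ k ∈ Finset.Icc 1 (n + 1), (-1 : ℝ) ^ (k + 1) / k
          * ((Ev (Fin.cons x₁ y) (boltzmann Φ) - 1) ^ k) Finset.univ := by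
    show (∑ k ∈ Finset.Icc 1 (n + 1), (-1 : ℝ) ^ (k + 1) / k
        * convPow (boltzmann Φ - oneSeq d) k (n + 1) (Fin.cons x₁ y)) = _
    refine Finset.sum_congr rfl fun k _ => ?_
    congr 1
    have h1 : Ev (Fin.cons x₁ y) (boltzmann Φ) - 1
        = Ev (Fin.cons x₁ y) (boltzmann Φ - oneSeq d) := by
      rw [Ev_sub, Ev_oneSeq]
    rw [h1, ← Ev_convPow]
    exact (ev_univ (convPow (boltzmann Φ - oneSeq d) k) (Fin.cons x₁ y)).symm
  have hLHS : conv psiInv (fun k Y => boltzmann Φ (k + 1) (Fin.cons x₁ Y)) n y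
      = (Ev (Fin.cons x₁ y) psiInv
          * M.der 0 (Ev (Fin.cons x₁ y) (boltzmann Φ))) Finset.univ := by
    rw [M.mul_apply, Finset.powerset_univ]
    rw [← Finset.sum_filter_add_sum_filter_not Finset.univ (fun T => (0 : Fin (n + 1)) ∈ T)]
    have hzero : ∑ T ∈ Finset.univ.filter (fun T => (0 : Fin (n + 1)) ∈ T),
        Ev (Fin.cons x₁ y) psiInv T
          * M.der 0 (Ev (Fin.cons x₁ y) (boltzmann Φ)) (Finset.univ \ T) = 0 := by
      refine Finset.sum_eq_zero fun T hT => ?_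
      rw [Finset.mem_filter] at hT
      have h1 : (0 : Fin (n + 1)) ∉ Finset.univ \ T := by
        simp [Finset.mem_sdiff, hT.2]
      rw [M.der_apply, if_neg h1, mul_zero]
    rw [hzero, zero_add]
    show (∑ S : Finset (Fin n), psiInv S.card (subseqVals y S)
        * boltzmann Φ (Sᶜ.card + 1) (Fin.cons x₁ (subseqVals y Sᶜ))) = _
    have hXe : (Fin.cons x₁ y : Fin (n + 1) → EuclideanSpace ℝ (Fin d)) ∘ ⇑(Fin.succOrderEmb n) = y := by
      funext i
      simp
    refine Finset.sum_nbij' (fun S => S.map (Fin.succOrderEmb n).toEmbedding)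
        (fun T => T.preimage Fin.succ ((Fin.succ_injective n).injOn)) ?_ ?_ ?_ ?_ ?_
    · intro S _
      rw [Finset.mem_filter]
      refine ⟨Finset.mem_univ _, ?_⟩
      simp only [Finset.mem_map]
      rintro ⟨x, _, hx⟩
      exact Fin.succ_ne_zero x hx
    · intro T _
      exact Finset.mem_univ _
    · intro S _
      ext b
      simp [Finset.mem_preimage, Finset.mem_map]
    · intro T hT
      rw [Finset.mem_filter] at hT
      ext a
      refine Fin.cases ?_ ?_ a
      · simp only [Finset.mem_map]
        constructor
        · rintro ⟨x, _, hx⟩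
          exact absurd hx (Fin.succ_ne_zero x)
        · intro h
          exact absurd h hT.2
      · intro b
        simp [Finset.mem_map, Finset.mem_preimage]
    · intro S _
      have hcompl : Finset.univ \ (S.map (Fin.succOrderEmb n).toEmbedding)
          = (S.map (Fin.succOrderEmb n).toEmbedding)ᶜ :=
        (Finset.compl_eq_univ_sdiff _).symm
      rw [hcompl, compl_map_succ]
      rw [M.der_apply, if_pos (Finset.mem_insert_self _ _)]
      congr 1
      · show psiInv S.card (subseqVals y S)
          = psiInv (S.map (Fin.succOrderEmb n).toEmbedding).card
              (subseqVals (Fin.cons x₁ y) (S.map (Fin.succOrderEmb n).toEmbedding))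
        rw [ev_map psiInv (Fin.cons x₁ y) (Fin.succOrderEmb n) S, hXe]
      · show boltzmann Φ (Sᶜ.card + 1) (Fin.cons x₁ (subseqVals y Sᶜ))
          = boltzmann Φ (insert 0 (Sᶜ.map (Fin.succOrderEmb n).toEmbedding)).card
              (subseqVals (Fin.cons x₁ y) (insert 0 (Sᶜ.map (Fin.succOrderEmb n).toEmbedding)))
        rw [ev_insert_zero (boltzmann Φ) x₁ y Sᶜ]
  rw [hLHS, halg]
  exact hRHS.symm

end
end

section
/- (Telescoping product difference bound) Suppose x₂,…,xₘ are pairwise 1-separated from x₁ and from each other, Y₁,…,Yₛ ∈ C, and g₁, g₂ satisfy the hard-core assumptions with constant c < 1. Then ∑_{z₁∈Y₁}⋯∑_{zₛ∈Yₛ} |∏_{i=2}^m f₁(xᵢ−x₁)∏_{j=1}^s g₁(zⱼ−x₁) − ∏_{i=2}^m f₂(xᵢ−x₁)∏_{j=1}^s g₂(zⱼ−x₁)| ≤ (m+s)·e^{2c}·(c₀+c)^s·‖g₁−g₂‖, where fₖ = gₖ + 1. -/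
open Finset Metric

private lemma tel_abs (n : ℕ) (a b : Fin n → ℝ) :
    |∏ i, a i - ∏ i, b i| ≤
      ∑ i : Fin n, ∏ j : Fin n,
        (if j < i then |a j| else if j = i then |a j - b j| else |b j|) := by
  induction n with
  | zero => simp
  | succ n ih =>
    rw [Fin.prod_univ_castSucc (f := a), Fin.prod_univ_castSucc (f := b),
        Fin.sum_univ_castSucc]
    have key : |(∏ i : Fin n, a i.castSucc) * a (Fin.last n) -
          (∏ i : Fin n, b i.castSucc) * b (Fin.last n)|
        ≤ |∏ i : Fin n, a i.castSucc - ∏ i : Fin n, b i.castSucc| * |b (Fin.last n)|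
          + (∏ i : Fin n, |a i.castSucc|) * |a (Fin.last n) - b (Fin.last n)| := by
      have h1 : (∏ i : Fin n, a i.castSucc) * a (Fin.last n) -
          (∏ i : Fin n, b i.castSucc) * b (Fin.last n)
        = (∏ i : Fin n, a i.castSucc - ∏ i : Fin n, b i.castSucc) * b (Fin.last n)
          + (∏ i : Fin n, a i.castSucc) * (a (Fin.last n) - b (Fin.last n)) := by ring
      rw [h1]
      refine (abs_add_le _ _).trans ?_
      rw [abs_mul, abs_mul, Finset.abs_prod]
    refine key.trans ?_
    have hlast : (∏ j : Fin (n+1),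
        (if j < Fin.last n then |a j| else if j = Fin.last n then |a j - b j| else |b j|))
        = (∏ j : Fin n, |a j.castSucc|) * |a (Fin.last n) - b (Fin.last n)| := by
      rw [Fin.prod_univ_castSucc]
      congr 1
      · refine Finset.prod_congr rfl fun j _ => ?_
        rw [if_pos (Fin.castSucc_lt_last j)]
      · simp
    have hcs : ∀ i : Fin n, (∏ j : Fin (n+1),
        (if j < i.castSucc then |a j| else if j = i.castSucc then |a j - b j| else |b j|))
        = (∏ j : Fin n, (if j < i then |a j.castSucc| else if j = i then
            |a j.castSucc - b j.castSucc| else |b j.castSucc|)) * |b (Fin.last n)| := by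
      intro i
      rw [Fin.prod_univ_castSucc]
      congr 1
      · refine Finset.prod_congr rfl fun j _ => ?_
        simp [Fin.castSucc_lt_castSucc_iff, Fin.castSucc_inj]
      · rw [if_neg, if_neg]
        · exact (Fin.castSucc_lt_last i).ne'
        · exact not_lt.2 (Fin.castSucc_lt_last i).le
    rw [hlast]
    simp only [hcs]
    rw [← Finset.sum_mul]
    have := mul_le_mul_of_nonneg_right (ih (fun j => a j.castSucc) (fun j => b j.castSucc))
      (abs_nonneg (b (Fin.last n)))
    linarith

/-- Sum of `|h (y - x₁)|` over a 1-separated set of points all at distance ≥ 1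
from `x₁` is controlled by the abstract sum hypothesis. -/
private lemma far_sum {E : Type*} [NormedAddCommGroup E] (h : E → ℝ) (M : ℝ) (x₁ : E)
    (F : Finset E)
    (hsum : ∀ X : Finset E, (∀ x ∈ X, 1 ≤ ‖x‖) →
      (∀ x ∈ X, ∀ y ∈ X, x ≠ y → 1 ≤ dist x y) → ∑ x ∈ X, |h x| ≤ M)
    (hfar : ∀ y ∈ F, 1 ≤ dist y x₁)
    (hFsep : ∀ u ∈ F, ∀ v ∈ F, u ≠ v → 1 ≤ dist u v) :
    ∑ y ∈ F, |h (y - x₁)| ≤ M := by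
  classical
  have hinj : Function.Injective fun y : E => y - x₁ := sub_left_injective
  have himg : ∑ x ∈ F.image (fun y => y - x₁), |h x| = ∑ y ∈ F, |h (y - x₁)| :=
    Finset.sum_image (fun a _ b _ hab => hinj hab)
  rw [← himg]
  refine hsum _ ?_ ?_
  · intro x hx
    rcases Finset.mem_image.1 hx with ⟨y, hy, rfl⟩
    rw [← dist_eq_norm]
    simpa using hfar y hy
  · intro x hx y hy hxy
    rcases Finset.mem_image.1 hx with ⟨u, hu, rfl⟩
    rcases Finset.mem_image.1 hy with ⟨v, hv, rfl⟩
    rw [dist_sub_right]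
    exact hFsep u hu v hv (fun huv => hxy (by rw [huv]))

/-- telescoping product difference bound: with `x₂,…,xₘ` (here
`xs 0, …, xs (k-1)` with `k = m - 1`) pairwise 1-separated from `x₁` and from each
other, `Y₁,…,Yₛ` finite 1-separated sets, `g₁, g₂` satisfying the hard-core
assumptions with constant `c < 1`, `‖g₁ - g₂‖ ≤ t`, and `c₀` bounding the number of
1-separated points in a unit ball,
`∑_{z∈Y₁×⋯×Yₛ} |∏_i f₁(xᵢ-x₁)∏_j g₁(zⱼ-x₁) - ∏_i f₂(xᵢ-x₁)∏_j g₂(zⱼ-x₁)|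
  ≤ (m+s)·e^{2c}·(c₀+c)^s·t`, where `fₗ = gₗ + 1`. -/
theorem stmt_16 (d : ℕ) (g₁ g₂ : EuclideanSpace ℝ (Fin d) → ℝ) (c c₀ t : ℝ)
    (hc0 : 0 ≤ c) (hc : c < 1) (ht : 0 ≤ t)
    (h₁even : ∀ x, g₁ (-x) = g₁ x) (h₂even : ∀ x, g₂ (-x) = g₂ x)
    (h₁ge : ∀ x, 1 ≤ ‖x‖ → -c ≤ g₁ x) (h₂ge : ∀ x, 1 ≤ ‖x‖ → -c ≤ g₂ x)
    (h₁core : ∀ x, ‖x‖ < 1 → g₁ x = -1) (h₂core : ∀ x, ‖x‖ < 1 → g₂ x = -1)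
    (h₁sum : ∀ X : Finset (EuclideanSpace ℝ (Fin d)),
      (∀ x ∈ X, 1 ≤ ‖x‖) → (∀ x ∈ X, ∀ y ∈ X, x ≠ y → 1 ≤ dist x y) →
      ∑ x ∈ X, |g₁ x| ≤ c)
    (h₂sum : ∀ X : Finset (EuclideanSpace ℝ (Fin d)),
      (∀ x ∈ X, 1 ≤ ‖x‖) → (∀ x ∈ X, ∀ y ∈ X, x ≠ y → 1 ≤ dist x y) →
      ∑ x ∈ X, |g₂ x| ≤ c)
    (hdiff : ∀ X : Finset (EuclideanSpace ℝ (Fin d)),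
      (∀ x ∈ X, 1 ≤ ‖x‖) → (∀ x ∈ X, ∀ y ∈ X, x ≠ y → 1 ≤ dist x y) →
      ∑ x ∈ X, |g₁ x - g₂ x| ≤ t)
    (hc₀ : ∀ (z : EuclideanSpace ℝ (Fin d)) (S : Finset (EuclideanSpace ℝ (Fin d))),
      ↑S ⊆ ball z 1 → (∀ x ∈ S, ∀ y ∈ S, x ≠ y → 1 ≤ dist x y) → (S.card : ℝ) ≤ c₀)
    (k : ℕ) (x₁ : EuclideanSpace ℝ (Fin d)) (xs : Fin k → EuclideanSpace ℝ (Fin d))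
    (hsep₁ : ∀ i, 1 ≤ dist (xs i) x₁)
    (hsep : ∀ i j, i ≠ j → 1 ≤ dist (xs i) (xs j))
    (s : ℕ) (Y : Fin s → Finset (EuclideanSpace ℝ (Fin d)))
    (hY : ∀ j, ∀ u ∈ Y j, ∀ v ∈ Y j, u ≠ v → 1 ≤ dist u v) :
    ∑ z ∈ Fintype.piFinset Y,
      |(∏ i : Fin k, (g₁ (xs i - x₁) + 1)) * (∏ j : Fin s, g₁ (z j - x₁)) -
        (∏ i : Fin k, (g₂ (xs i - x₁) + 1)) * (∏ j : Fin s, g₂ (z j - x₁))| ≤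
      ((k + 1 + s : ℕ) : ℝ) * Real.exp (2 * c) * (c₀ + c) ^ s * t := by
  classical
  set C : ℝ := c₀ + c with hC
  -- c₀ ≥ 1
  have hc₀1 : (1 : ℝ) ≤ c₀ := by
    have := hc₀ x₁ {x₁} (by simp [Metric.mem_ball]) (by simp)
    simpa using this
  have hC1 : (1 : ℝ) ≤ C := by simp only [hC]; linarith
  have hC0 : (0 : ℝ) ≤ C := by linarith
  -- sums over the xs points
  have hxs_sum : ∀ h : EuclideanSpace ℝ (Fin d) → ℝ, ∀ M : ℝ,
      (∀ X : Finset (EuclideanSpace ℝ (Fin d)), (∀ x ∈ X, 1 ≤ ‖x‖) →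
        (∀ x ∈ X, ∀ y ∈ X, x ≠ y → 1 ≤ dist x y) → ∑ x ∈ X, |h x| ≤ M) →
      ∑ j : Fin k, |h (xs j - x₁)| ≤ M := by
    intro h M hs
    have hinj : Function.Injective fun j : Fin k => xs j - x₁ := by
      intro i j hij
      by_contra hne
      have h1 := hsep i j hne
      have : xs i = xs j := by
        have := sub_left_injective (b := x₁) hij
        exact this
      rw [this, dist_self] at h1
      linarith
    have himg : ∑ x ∈ Finset.image (fun j : Fin k => xs j - x₁) univ, |h x|
        = ∑ j : Fin k, |h (xs j - x₁)| :=
      Finset.sum_image (fun a _ b _ hab => hinj hab)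
    rw [← himg]
    refine hs _ ?_ ?_
    · intro x hx
      rcases Finset.mem_image.1 hx with ⟨j, _, rfl⟩
      rw [← dist_eq_norm]
      exact hsep₁ j
    · intro x hx y hy hxy
      rcases Finset.mem_image.1 hx with ⟨i, _, rfl⟩
      rcases Finset.mem_image.1 hy with ⟨j, _, rfl⟩
      rw [dist_sub_right]
      exact hsep i j (fun hij => hxy (by rw [hij]))
  have hxs₁ : ∑ j : Fin k, |g₁ (xs j - x₁)| ≤ c := hxs_sum g₁ c h₁sum
  have hxs₂ : ∑ j : Fin k, |g₂ (xs j - x₁)| ≤ c := hxs_sum g₂ c h₂sum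
  -- pointwise difference bound at a far point
  have hptdiff : ∀ x : EuclideanSpace ℝ (Fin d), 1 ≤ ‖x‖ → |g₁ x - g₂ x| ≤ t := by
    intro x hx
    have := hdiff {x} (by simpa using hx) (by simp)
    simpa using this
  -- sums over the Y sets: split into near (ball) and far parts
  have hYsplit : ∀ (h : EuclideanSpace ℝ (Fin d) → ℝ) (M θ : ℝ), 0 ≤ θ →
      (∀ x : EuclideanSpace ℝ (Fin d), ‖x‖ < 1 → |h x| = θ) →
      (∀ X : Finset (EuclideanSpace ℝ (Fin d)), (∀ x ∈ X, 1 ≤ ‖x‖) →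
        (∀ x ∈ X, ∀ y ∈ X, x ≠ y → 1 ≤ dist x y) → ∑ x ∈ X, |h x| ≤ M) →
      ∀ j : Fin s, ∑ y ∈ Y j, |h (y - x₁)| ≤ θ * c₀ + M := by
    intro h M θ hθ hnear hs j
    rw [← Finset.sum_filter_add_sum_filter_not (Y j) (fun y => dist y x₁ < 1)]
    have hN : ∑ y ∈ (Y j).filter (fun y => dist y x₁ < 1), |h (y - x₁)| ≤ θ * c₀ := by
      have hconst : ∑ y ∈ (Y j).filter (fun y => dist y x₁ < 1), |h (y - x₁)|
          = ((Y j).filter (fun y => dist y x₁ < 1)).card * θ := by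
        rw [Finset.sum_congr rfl (fun y hy => ?_), Finset.sum_const, nsmul_eq_mul]
        have hlt : dist y x₁ < 1 := (Finset.mem_filter.1 hy).2
        exact hnear _ (by rwa [← dist_eq_norm])
      rw [hconst]
      have hcard : (((Y j).filter (fun y => dist y x₁ < 1)).card : ℝ) ≤ c₀ := by
        refine hc₀ x₁ _ ?_ ?_
        · intro y hy
          have := (Finset.mem_filter.1 (by exact_mod_cast hy)).2
          simpa [Metric.mem_ball] using this
        · intro u hu v hv huv
          exact hY j u (Finset.mem_filter.1 hu).1 v (Finset.mem_filter.1 hv).1 huv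
      calc (((Y j).filter (fun y => dist y x₁ < 1)).card : ℝ) * θ
          ≤ c₀ * θ := mul_le_mul_of_nonneg_right hcard hθ
        _ = θ * c₀ := mul_comm _ _
    have hF : ∑ y ∈ (Y j).filter (fun y => ¬ dist y x₁ < 1), |h (y - x₁)| ≤ M := by
      refine far_sum h M x₁ _ hs ?_ ?_
      · intro y hy
        exact not_lt.1 (Finset.mem_filter.1 hy).2
      · intro u hu v hv huv
        exact hY j u (Finset.mem_filter.1 hu).1 v (Finset.mem_filter.1 hv).1 huv
    linarith
  have hY₁ : ∀ j : Fin s, ∑ y ∈ Y j, |g₁ (y - x₁)| ≤ C := by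
    intro j
    have := hYsplit g₁ c 1 zero_le_one (fun x hx => by rw [h₁core x hx]; simp) h₁sum j
    rw [hC]; linarith
  have hY₂ : ∀ j : Fin s, ∑ y ∈ Y j, |g₂ (y - x₁)| ≤ C := by
    intro j
    have := hYsplit g₂ c 1 zero_le_one (fun x hx => by rw [h₂core x hx]; simp) h₂sum j
    rw [hC]; linarith
  have hYd : ∀ j : Fin s, ∑ y ∈ Y j, |g₁ (y - x₁) - g₂ (y - x₁)| ≤ t := by
    intro j
    have := hYsplit (fun x => g₁ x - g₂ x) t 0 le_rfl
      (fun x hx => by show |g₁ x - g₂ x| = 0; rw [h₁core x hx, h₂core x hx]; simp) hdiff j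
    simpa using this
  set e2 : ℝ := Real.exp (2 * c) with he2
  have he2pos : (0 : ℝ) < e2 := Real.exp_pos _
  have hece2 : Real.exp c ≤ e2 := Real.exp_le_exp.2 (by linarith)
  set P₁ : ℝ := ∏ i : Fin k, (g₁ (xs i - x₁) + 1) with hP₁
  set P₂ : ℝ := ∏ i : Fin k, (g₂ (xs i - x₁) + 1) with hP₂
  -- bound on |P₂|
  have habs_f : ∀ (g : EuclideanSpace ℝ (Fin d) → ℝ) (x : EuclideanSpace ℝ (Fin d)), |g x + 1| ≤ Real.exp |g x| := by
    intro g x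
    calc |g x + 1| ≤ |g x| + 1 := by
            have := abs_add_le (g x) 1
            simpa using this
      _ ≤ Real.exp |g x| := Real.add_one_le_exp _
  have hP₂abs : |P₂| ≤ Real.exp c := by
    rw [hP₂, Finset.abs_prod]
    calc ∏ i : Fin k, |g₂ (xs i - x₁) + 1|
        ≤ ∏ i : Fin k, Real.exp |g₂ (xs i - x₁)| :=
          Finset.prod_le_prod (fun i _ => abs_nonneg _) (fun i _ => habs_f g₂ _)
      _ = Real.exp (∑ i : Fin k, |g₂ (xs i - x₁)|) := (Real.exp_sum _ _).symm
      _ ≤ Real.exp c := Real.exp_le_exp.2 hxs₂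
  -- bound on |P₁ - P₂| via telescoping
  have hPdiff : |P₁ - P₂| ≤ k * (e2 * t) := by
    refine (tel_abs k (fun i => g₁ (xs i - x₁) + 1) (fun i => g₂ (xs i - x₁) + 1)).trans ?_
    have hterm : ∀ i : Fin k,
        (∏ j : Fin k, (if j < i then |g₁ (xs j - x₁) + 1|
          else if j = i then |(g₁ (xs j - x₁) + 1) - (g₂ (xs j - x₁) + 1)|
          else |g₂ (xs j - x₁) + 1|)) ≤ e2 * t := by
      intro i
      have hstep : (∏ j : Fin k, (if j < i then |g₁ (xs j - x₁) + 1|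
          else if j = i then |(g₁ (xs j - x₁) + 1) - (g₂ (xs j - x₁) + 1)|
          else |g₂ (xs j - x₁) + 1|))
          ≤ ∏ j : Fin k, (if j = i then t
            else Real.exp (|g₁ (xs j - x₁)| + |g₂ (xs j - x₁)|)) := by
        refine Finset.prod_le_prod (fun j _ => by positivity) (fun j _ => ?_)
        by_cases hji : j = i
        · subst hji
          simp only [lt_irrefl, if_false, if_pos rfl, if_true]
          have heq : (g₁ (xs j - x₁) + 1) - (g₂ (xs j - x₁) + 1)
              = g₁ (xs j - x₁) - g₂ (xs j - x₁) := by ring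
          rw [heq]
          refine hptdiff _ ?_
          rw [← dist_eq_norm]; exact hsep₁ j
        · by_cases hlt : j < i
          · simp only [if_pos hlt, if_neg hji]
            refine (habs_f g₁ _).trans (Real.exp_le_exp.2 ?_)
            have := abs_nonneg (g₂ (xs j - x₁)); linarith
          · simp only [if_neg hlt, if_neg hji]
            refine (habs_f g₂ _).trans (Real.exp_le_exp.2 ?_)
            have := abs_nonneg (g₁ (xs j - x₁)); linarith
      refine hstep.trans ?_
      rw [← Finset.mul_prod_erase univ _ (Finset.mem_univ i), if_pos rfl]
      have herase : (∏ j ∈ univ.erase i, (if j = i then t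
            else Real.exp (|g₁ (xs j - x₁)| + |g₂ (xs j - x₁)|)))
          = ∏ j ∈ univ.erase i, Real.exp (|g₁ (xs j - x₁)| + |g₂ (xs j - x₁)|) :=
        Finset.prod_congr rfl (fun j hj => if_neg (Finset.ne_of_mem_erase hj))
      rw [herase, ← Real.exp_sum]
      have hsle : ∑ j ∈ univ.erase i, (|g₁ (xs j - x₁)| + |g₂ (xs j - x₁)|)
          ≤ 2 * c := by
        have hsub : ∑ j ∈ univ.erase i, (|g₁ (xs j - x₁)| + |g₂ (xs j - x₁)|)
            ≤ ∑ j : Fin k, (|g₁ (xs j - x₁)| + |g₂ (xs j - x₁)|) :=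
          Finset.sum_le_sum_of_subset_of_nonneg (Finset.subset_univ _)
            (fun j _ _ => by positivity)
        have huniv : ∑ j : Fin k, (|g₁ (xs j - x₁)| + |g₂ (xs j - x₁)|)
            = (∑ j : Fin k, |g₁ (xs j - x₁)|) + ∑ j : Fin k, |g₂ (xs j - x₁)| :=
          Finset.sum_add_distrib
        linarith
      have := Real.exp_le_exp.2 hsle
      calc t * Real.exp (∑ j ∈ univ.erase i, (|g₁ (xs j - x₁)| + |g₂ (xs j - x₁)|))
          ≤ t * e2 := mul_le_mul_of_nonneg_left this ht
        _ = e2 * t := mul_comm _ _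
    calc ∑ i : Fin k, (∏ j : Fin k, (if j < i then |g₁ (xs j - x₁) + 1|
          else if j = i then |(g₁ (xs j - x₁) + 1) - (g₂ (xs j - x₁) + 1)|
          else |g₂ (xs j - x₁) + 1|))
        ≤ ∑ i : Fin k, (e2 * t) := Finset.sum_le_sum (fun i _ => hterm i)
      _ = k * (e2 * t) := by simp [mul_comm]
  -- bound on ∑_z ∏ |g₁|
  have hQ₁abs : ∑ z ∈ Fintype.piFinset Y, ∏ j : Fin s, |g₁ (z j - x₁)| ≤ C ^ s := by
    rw [← Finset.prod_univ_sum Y (fun j y => |g₁ (y - x₁)|)]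
    calc ∏ j : Fin s, ∑ y ∈ Y j, |g₁ (y - x₁)|
        ≤ ∏ j : Fin s, C :=
          Finset.prod_le_prod (fun j _ => Finset.sum_nonneg fun y _ => abs_nonneg _)
            (fun j _ => hY₁ j)
      _ = C ^ s := by simp
  -- bound on ∑_z |Q₁ - Q₂|
  have hQdiff : ∑ z ∈ Fintype.piFinset Y,
      |(∏ j : Fin s, g₁ (z j - x₁)) - (∏ j : Fin s, g₂ (z j - x₁))|
      ≤ s * (t * C ^ s) := by
    have hz : ∀ z : Fin s → EuclideanSpace ℝ (Fin d),
        |(∏ j : Fin s, g₁ (z j - x₁)) - (∏ j : Fin s, g₂ (z j - x₁))|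
        ≤ ∑ i : Fin s, ∏ j : Fin s,
          (if j < i then |g₁ (z j - x₁)| else if j = i then
            |g₁ (z j - x₁) - g₂ (z j - x₁)| else |g₂ (z j - x₁)|) := fun z =>
      tel_abs s (fun j => g₁ (z j - x₁)) (fun j => g₂ (z j - x₁))
    refine (Finset.sum_le_sum (fun z _ => hz z)).trans ?_
    rw [Finset.sum_comm]
    have hi : ∀ i : Fin s, ∑ z ∈ Fintype.piFinset Y, ∏ j : Fin s,
        (if j < i then |g₁ (z j - x₁)| else if j = i then
          |g₁ (z j - x₁) - g₂ (z j - x₁)| else |g₂ (z j - x₁)|) ≤ t * C ^ s := by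
      intro i
      have hswap : ∑ z ∈ Fintype.piFinset Y, ∏ j : Fin s,
          (if j < i then |g₁ (z j - x₁)| else if j = i then
            |g₁ (z j - x₁) - g₂ (z j - x₁)| else |g₂ (z j - x₁)|)
          = ∏ j : Fin s, ∑ y ∈ Y j,
            (if j < i then |g₁ (y - x₁)| else if j = i then
              |g₁ (y - x₁) - g₂ (y - x₁)| else |g₂ (y - x₁)|) := by
        rw [← Finset.prod_univ_sum Y (fun j y =>
          (if j < i then |g₁ (y - x₁)| else if j = i then
            |g₁ (y - x₁) - g₂ (y - x₁)| else |g₂ (y - x₁)|))]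
      rw [hswap]
      have hfac : (∏ j : Fin s, ∑ y ∈ Y j,
          (if j < i then |g₁ (y - x₁)| else if j = i then
            |g₁ (y - x₁) - g₂ (y - x₁)| else |g₂ (y - x₁)|))
          ≤ ∏ j : Fin s, (if j = i then t else C) := by
        refine Finset.prod_le_prod
          (fun j _ => Finset.sum_nonneg fun y _ => by positivity) (fun j _ => ?_)
        by_cases hji : j = i
        · subst hji
          rw [if_pos rfl]
          refine le_trans (le_of_eq (Finset.sum_congr rfl (fun y _ => by
            rw [if_neg (lt_irrefl j), if_pos rfl]))) (hYd j)
        · rw [if_neg hji]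
          by_cases hlt : j < i
          · refine le_trans (le_of_eq (Finset.sum_congr rfl (fun y _ => by
              rw [if_pos hlt]))) (hY₁ j)
          · refine le_trans (le_of_eq (Finset.sum_congr rfl (fun y _ => by
              rw [if_neg hlt, if_neg hji]))) (hY₂ j)
      refine hfac.trans ?_
      rw [← Finset.mul_prod_erase univ _ (Finset.mem_univ i), if_pos rfl]
      have herase : (∏ j ∈ univ.erase i, (if j = i then t else C))
          = C ^ (univ.erase i).card :=
        (Finset.prod_congr rfl (fun j hj => if_neg (Finset.ne_of_mem_erase hj))).trans
          (Finset.prod_const C)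
      rw [herase]
      have hpow : C ^ (univ.erase i).card ≤ C ^ s := by
        refine pow_le_pow_right₀ hC1 ?_
        rw [Finset.card_erase_of_mem (Finset.mem_univ i)]
        simp [Nat.sub_le]
      exact mul_le_mul_of_nonneg_left hpow ht
    calc ∑ i : Fin s, ∑ z ∈ Fintype.piFinset Y, ∏ j : Fin s,
        (if j < i then |g₁ (z j - x₁)| else if j = i then
          |g₁ (z j - x₁) - g₂ (z j - x₁)| else |g₂ (z j - x₁)|)
        ≤ ∑ i : Fin s, (t * C ^ s) := Finset.sum_le_sum (fun i _ => hi i)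
      _ = s * (t * C ^ s) := by simp [mul_comm]
  -- assembly
  have hstep : ∀ z : Fin s → EuclideanSpace ℝ (Fin d),
      |P₁ * (∏ j : Fin s, g₁ (z j - x₁)) - P₂ * (∏ j : Fin s, g₂ (z j - x₁))|
      ≤ |P₁ - P₂| * ∏ j : Fin s, |g₁ (z j - x₁)|
        + |P₂| * |(∏ j : Fin s, g₁ (z j - x₁)) - (∏ j : Fin s, g₂ (z j - x₁))| := by
    intro z
    have h1 : P₁ * (∏ j : Fin s, g₁ (z j - x₁)) - P₂ * (∏ j : Fin s, g₂ (z j - x₁))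
        = (P₁ - P₂) * (∏ j : Fin s, g₁ (z j - x₁))
          + P₂ * ((∏ j : Fin s, g₁ (z j - x₁)) - (∏ j : Fin s, g₂ (z j - x₁))) := by ring
    rw [h1]
    refine (abs_add_le _ _).trans ?_
    rw [abs_mul, abs_mul, Finset.abs_prod]
  refine le_trans (Finset.sum_le_sum (fun z _ => hstep z)) ?_
  rw [Finset.sum_add_distrib, ← Finset.mul_sum, ← Finset.mul_sum]
  have hterm1 : |P₁ - P₂| * (∑ z ∈ Fintype.piFinset Y, ∏ j : Fin s, |g₁ (z j - x₁)|)
      ≤ (k * (e2 * t)) * C ^ s := by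
    refine mul_le_mul hPdiff hQ₁abs
      (Finset.sum_nonneg fun z _ => Finset.prod_nonneg fun j _ => abs_nonneg _)
      (by positivity)
  have hterm2 : |P₂| * (∑ z ∈ Fintype.piFinset Y,
      |(∏ j : Fin s, g₁ (z j - x₁)) - (∏ j : Fin s, g₂ (z j - x₁))|)
      ≤ e2 * (s * (t * C ^ s)) := by
    refine mul_le_mul (hP₂abs.trans hece2) hQdiff
      (Finset.sum_nonneg fun z _ => abs_nonneg _) (le_of_lt he2pos)
  have hcast : ((k + 1 + s : ℕ) : ℝ) = (k : ℝ) + 1 + s := by push_cast; ring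
  rw [hcast]
  have hCs : (0 : ℝ) ≤ C ^ s := by positivity
  nlinarith [mul_nonneg (mul_nonneg he2pos.le hCs) ht]
end

section
/- (Recursive inequality implies factorial bound) Suppose nonnegative numbers d(m,n) (m,n ≥ 0) satisfy d(0,n) = 0 for all n, and for m ≥ 1: d(m,n) ≤ ∑_{s=0}^n (n!/(s!(n−s)!)) e^c (c₀+c)^s d(m+s−1, n−s) + K·(m+n)·e^{c₀+3c}·n!·q₁^{m+n−1}, where c, c₀, q₁, K ≥ 0 are constants. Then d(m,n) ≤ K·(m+n)·n!·q₂^{m+n} for q₂ = 2e^{c₀+3c}·max(1, q₁), for all m, n. -/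
/-- recursive inequality implies factorial bound: if `D m n ≥ 0`,
`D 0 n = 0`, and for `m ≥ 1`
`D m n ≤ ∑_{s=0}^n (n choose s)·e^c·(c₀+c)^s·D (m+s-1) (n-s)
          + K·(m+n)·e^{c₀+3c}·n!·q₁^{m+n-1}`,
then `D m n ≤ K·(m+n)·n!·q₂^{m+n}` with `q₂ = 2·e^{c₀+3c}·max 1 q₁`. -/
theorem stmt_17 (c c₀ q₁ K : ℝ) (hc : 0 ≤ c) (hc₀ : 0 ≤ c₀) (hq₁ : 0 ≤ q₁)
    (hK : 0 ≤ K) (D : ℕ → ℕ → ℝ)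
    (hnonneg : ∀ m n, 0 ≤ D m n)
    (hbase : ∀ n, D 0 n = 0)
    (hrec : ∀ m n, D (m + 1) n ≤
      (∑ s ∈ Finset.range (n + 1),
        (n.choose s : ℝ) * Real.exp c * (c₀ + c) ^ s * D (m + s) (n - s)) +
        K * ((m + 1 + n : ℕ) : ℝ) * Real.exp (c₀ + 3 * c) *
          (n.factorial : ℝ) * q₁ ^ (m + n)) :
    ∀ m n, D m n ≤
      K * ((m + n : ℕ) : ℝ) * (n.factorial : ℝ) *
        (2 * Real.exp (c₀ + 3 * c) * max 1 q₁) ^ (m + n) := by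
  have hE1 : (1:ℝ) ≤ Real.exp (c₀ + 3 * c) := Real.one_le_exp (by linarith)
  have hM1 : (1:ℝ) ≤ max 1 q₁ := le_max_left _ _
  set E := Real.exp (c₀ + 3 * c) with hEdef
  set q₂ := 2 * E * max 1 q₁ with hq₂def
  have hq₂1 : (1:ℝ) ≤ q₂ := by nlinarith
  have hq₂0 : (0:ℝ) ≤ q₂ := by linarith
  have hMq₂ : max 1 q₁ ≤ q₂ := by nlinarith
  suffices h : ∀ N m n, m + n = N →
      D m n ≤ K * ((m + n : ℕ) : ℝ) * (n.factorial : ℝ) * q₂ ^ (m + n) by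
    intro m n; exact h (m + n) m n rfl
  intro N
  induction N using Nat.strong_induction_on with
  | _ N ih =>
    intro m n hmn
    match m with
    | 0 =>
      rw [hbase]
      positivity
    | m + 1 =>
      have key := hrec m n
      have hsum : (∑ s ∈ Finset.range (n + 1),
          (n.choose s : ℝ) * Real.exp c * (c₀ + c) ^ s * D (m + s) (n - s)) ≤
          K * ((m + n : ℕ) : ℝ) * q₂ ^ (m + n) * Real.exp c *
            ∑ s ∈ Finset.range (n + 1), (n.factorial : ℝ) * (c₀ + c) ^ s / s.factorial := by
        rw [Finset.mul_sum]
        apply Finset.sum_le_sum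
        intro s hs
        have hsle : s ≤ n := Nat.lt_succ_iff.mp (Finset.mem_range.mp hs)
        have hIH : D (m + s) (n - s) ≤
            K * (((m + s) + (n - s) : ℕ) : ℝ) * ((n - s).factorial : ℝ) *
              q₂ ^ ((m + s) + (n - s)) := by
          apply ih (m + n)
          · omega
          · omega
        have htot : (m + s) + (n - s) = m + n := by omega
        rw [htot] at hIH
        have hchoose : (n.choose s : ℝ) * ((n - s).factorial : ℝ) * (s.factorial : ℝ)
            = (n.factorial : ℝ) := by
          have := Nat.choose_mul_factorial_mul_factorial hsle
          push_cast [← this]; ring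
        have hsf : (0:ℝ) < (s.factorial : ℝ) := by positivity
        have hnz : (0:ℝ) ≤ (n.choose s : ℝ) * Real.exp c * (c₀ + c) ^ s := by positivity
        calc (n.choose s : ℝ) * Real.exp c * (c₀ + c) ^ s * D (m + s) (n - s)
            ≤ (n.choose s : ℝ) * Real.exp c * (c₀ + c) ^ s *
              (K * ((m + n : ℕ) : ℝ) * ((n - s).factorial : ℝ) * q₂ ^ (m + n)) :=
              mul_le_mul_of_nonneg_left hIH hnz
          _ = K * ((m + n : ℕ) : ℝ) * q₂ ^ (m + n) * Real.exp c *
              ((n.factorial : ℝ) * (c₀ + c) ^ s / s.factorial) := by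
              rw [← hchoose]; field_simp
      have hexp : ∑ s ∈ Finset.range (n + 1),
          (n.factorial : ℝ) * (c₀ + c) ^ s / s.factorial
          ≤ (n.factorial : ℝ) * Real.exp (c₀ + c) := by
        have h1 : ∑ s ∈ Finset.range (n + 1), (c₀ + c) ^ s / s.factorial
            ≤ Real.exp (c₀ + c) := Real.sum_le_exp_of_nonneg (by linarith) (n + 1)
        calc ∑ s ∈ Finset.range (n + 1), (n.factorial : ℝ) * (c₀ + c) ^ s / s.factorial
            = (n.factorial : ℝ) * ∑ s ∈ Finset.range (n + 1), (c₀ + c) ^ s / s.factorial := by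
              rw [Finset.mul_sum]; congr 1; ext s; ring
          _ ≤ (n.factorial : ℝ) * Real.exp (c₀ + c) := by
              apply mul_le_mul_of_nonneg_left h1 (by positivity)
      have hEcomb : Real.exp c * Real.exp (c₀ + c) ≤ E := by
        rw [hEdef, ← Real.exp_add]
        exact Real.exp_le_exp.mpr (by linarith)
      have hq₁pow : q₁ ^ (m + n) ≤ q₂ ^ (m + n) :=
        pow_le_pow_left₀ hq₁ (le_trans (le_max_right 1 q₁) hMq₂) _
      have hKmn : K * ((m + n : ℕ) : ℝ) * q₂ ^ (m + n)
          ≤ K * ((m + 1 + n : ℕ) : ℝ) * q₂ ^ (m + n) := by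
        have : ((m + n : ℕ) : ℝ) ≤ ((m + 1 + n : ℕ) : ℝ) := by push_cast; linarith
        have hqp : (0:ℝ) ≤ q₂ ^ (m + n) := by positivity
        exact mul_le_mul_of_nonneg_right (mul_le_mul_of_nonneg_left this hK) hqp
      -- combine
      have hfinal : D (m + 1) n ≤
          K * ((m + 1 + n : ℕ) : ℝ) * (n.factorial : ℝ) * q₂ ^ (m + n) * E
          + K * ((m + 1 + n : ℕ) : ℝ) * E * (n.factorial : ℝ) * q₂ ^ (m + n) := by
        refine le_trans key (add_le_add ?_ ?_)
        · refine le_trans hsum ?_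
          have h0 : (0:ℝ) ≤ K * ((m + n : ℕ) : ℝ) * q₂ ^ (m + n) := by positivity
          calc K * ((m + n : ℕ) : ℝ) * q₂ ^ (m + n) * Real.exp c *
                ∑ s ∈ Finset.range (n + 1), (n.factorial : ℝ) * (c₀ + c) ^ s / s.factorial
              ≤ K * ((m + n : ℕ) : ℝ) * q₂ ^ (m + n) * Real.exp c *
                ((n.factorial : ℝ) * Real.exp (c₀ + c)) := by
                apply mul_le_mul_of_nonneg_left hexp (by positivity)
            _ = K * ((m + n : ℕ) : ℝ) * q₂ ^ (m + n) * (n.factorial : ℝ) *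
                (Real.exp c * Real.exp (c₀ + c)) := by ring
            _ ≤ K * ((m + n : ℕ) : ℝ) * q₂ ^ (m + n) * (n.factorial : ℝ) * E := by
                apply mul_le_mul_of_nonneg_left hEcomb (by positivity)
            _ ≤ K * ((m + 1 + n : ℕ) : ℝ) * (n.factorial : ℝ) * q₂ ^ (m + n) * E := by
                have hle : ((m + n : ℕ) : ℝ) ≤ ((m + 1 + n : ℕ) : ℝ) := by
                  push_cast; linarith
                calc K * ((m + n : ℕ) : ℝ) * q₂ ^ (m + n) * (n.factorial : ℝ) * E
                    = ((m + n : ℕ) : ℝ) * (K * (n.factorial : ℝ) * q₂ ^ (m + n) * E) := by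
                      ring
                  _ ≤ ((m + 1 + n : ℕ) : ℝ) * (K * (n.factorial : ℝ) * q₂ ^ (m + n) * E) :=
                      mul_le_mul_of_nonneg_right hle (by positivity)
                  _ = K * ((m + 1 + n : ℕ) : ℝ) * (n.factorial : ℝ) * q₂ ^ (m + n) * E := by
                      ring
        · apply mul_le_mul_of_nonneg_left hq₁pow (by positivity)
      have heq : K * ((m + 1 + n : ℕ) : ℝ) * (n.factorial : ℝ) * q₂ ^ (m + 1 + n)
          = K * ((m + 1 + n : ℕ) : ℝ) * (n.factorial : ℝ) * q₂ ^ (m + n) * q₂ := by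
        rw [show m + 1 + n = (m + n) + 1 by omega, pow_succ]; ring
      rw [heq]
      refine le_trans hfinal ?_
      have h2E : 2 * E ≤ q₂ := by nlinarith
      have h0 : (0:ℝ) ≤ K * ((m + 1 + n : ℕ) : ℝ) * (n.factorial : ℝ) * q₂ ^ (m + n) := by
        positivity
      nlinarith
end
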